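/- arXiv:1708.01321 — 3 statements merged into one kernel-verified Lean document; each statement's English description precedes it below -/
import Mathlib

section
/- Every finite bicolored point set S = R ∪ B in the plane in general position with |R| ≥ 2 and |B| ≥ 2 contains at least one balanced 4-hole. -/
noncomputable section

/-- A set of points in the plane (modeled as `ℂ`) is in general position if
no three of its (distinct) points are collinear. -/
def GenPos (S : Set ℂ) : Prop :=
  ∀ p ∈ S, ∀ q ∈ S, ∀ r ∈ S, p ≠ q → p ≠ r → q ≠ r → ¬ Collinear ℝ ({p, q, r} : Set ℂ)

/-- The boundary of a quadrilateral with vertices `a, b, c, d` in cyclic order. -/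
def QuadBdry (a b c d : ℂ) : Set ℂ :=
  segment ℝ a b ∪ segment ℝ b c ∪ segment ℝ c d ∪ segment ℝ d a

/-- The quadrilateral with vertices `a, b, c, d` in cyclic order is simple:
vertices are pairwise distinct, consecutive edges meet exactly at their common
vertex, and opposite edges are disjoint. -/
def IsSimpleQuad (a b c d : ℂ) : Prop :=
  List.Pairwise (· ≠ ·) [a, b, c, d] ∧
  segment ℝ a b ∩ segment ℝ b c = {b} ∧
  segment ℝ b c ∩ segment ℝ c d = {c} ∧
  segment ℝ c d ∩ segment ℝ d a = {d} ∧
  segment ℝ d a ∩ segment ℝ a b = {a} ∧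
  segment ℝ a b ∩ segment ℝ c d = ∅ ∧
  segment ℝ b c ∩ segment ℝ d a = ∅

/-- The interior of a simple quadrilateral: the union of the bounded connected
components of the complement of its boundary. -/
def QuadInterior (a b c d : ℂ) : Set ℂ :=
  {x | x ∉ QuadBdry a b c d ∧
    Bornology.IsBounded (connectedComponentIn (QuadBdry a b c d)ᶜ x)}

/-- The (not necessarily convex) quadrilateral with vertices `a, b, c, d`
in cyclic order is a balanced 4-hole of the bicolored set `R ∪ B`:
it is simple, its vertices belong to `R ∪ B` with exactly two of them red and
two blue, and its open interior contains no point of `R ∪ B`. -/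
def IsBalanced4Hole (R B : Finset ℂ) (a b c d : ℂ) : Prop :=
  IsSimpleQuad a b c d ∧
  ({a, b, c, d} : Set ℂ) ⊆ (↑R ∪ ↑B : Set ℂ) ∧
  (({a, b, c, d} : Set ℂ) ∩ ↑R).ncard = 2 ∧
  (({a, b, c, d} : Set ℂ) ∩ ↑B).ncard = 2 ∧
  ∀ x ∈ (↑R ∪ ↑B : Set ℂ), x ∉ QuadInterior a b c d

/-- The set of boundaries of balanced 4-holes of `R ∪ B`; two balanced 4-holes
are distinct iff they have distinct boundaries (so this set counts them). -/
def balanced4HoleBdries (R B : Finset ℂ) : Set (Set ℂ) :=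
  {Q | ∃ a b c d : ℂ, IsBalanced4Hole R B a b c d ∧ Q = QuadBdry a b c d}

/-- `p q` is an edge of the convex hull of `S`: both endpoints belong to `S`
and some nonzero linear functional is maximized on `S` exactly along it. -/
def IsHullEdge (S : Set ℂ) (p q : ℂ) : Prop :=
  p ∈ S ∧ q ∈ S ∧ p ≠ q ∧
  ∃ f : ℂ →ₗ[ℝ] ℝ, f ≠ 0 ∧ f p = f q ∧ ∀ s ∈ S, f s ≤ f p

/-- The counter-clockwise angle (in `(0, 2π]`) from the ray `p → q` to the ray
`p → x`. -/
def ccwAngle (p q x : ℂ) : ℝ :=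
  if Complex.arg ((x - p) / (q - p)) ≤ 0 then
    Complex.arg ((x - p) / (q - p)) + 2 * Real.pi
  else Complex.arg ((x - p) / (q - p))

/-- `t` is the first point of `S` reached when rotating the ray `p → q`
counter-clockwise around `p`. -/
def IsFirstCCW (S : Set ℂ) (p q t : ℂ) : Prop :=
  t ∈ S ∧ t ≠ p ∧ t ≠ q ∧
  ∀ s ∈ S, s ≠ p → s ≠ q → s ≠ t → ccwAngle p q t < ccwAngle p q s

/-- `t` is the first point of `S` reached when rotating the ray `p → q`
clockwise around `p`. -/
def IsFirstCW (S : Set ℂ) (p q t : ℂ) : Prop :=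
  t ∈ S ∧ t ≠ p ∧ t ≠ q ∧
  ∀ s ∈ S, s ≠ p → s ≠ q → s ≠ t → ccwAngle p q s < ccwAngle p q t

/-- `t ∈ T(p,q)`: `t` is one of the (at most four) first points of `S = R ∪ B`
reached by the four rotations of the rays `p → q` around `p` and `q → p`
around `q`, clockwise and counter-clockwise. -/
def InT (R B : Finset ℂ) (p q t : ℂ) : Prop :=
  IsFirstCCW (↑R ∪ ↑B : Set ℂ) p q t ∨ IsFirstCW (↑R ∪ ↑B : Set ℂ) p q t ∨
  IsFirstCCW (↑R ∪ ↑B : Set ℂ) q p t ∨ IsFirstCW (↑R ∪ ↑B : Set ℂ) q p t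

/-- The bichromatic segment `p q` (`p` red, `q` blue) is green: it is an edge
or a diagonal of some balanced 4-hole, i.e. both `p` and `q` are vertices of
some balanced 4-hole. -/
def IsGreenEdge (R B : Finset ℂ) (p q : ℂ) : Prop :=
  p ∈ R ∧ q ∈ B ∧
  ∃ a b c d : ℂ, IsBalanced4Hole R B a b c d ∧
    p ∈ ({a, b, c, d} : Set ℂ) ∧ q ∈ ({a, b, c, d} : Set ℂ)

/-- The bichromatic segment `p q` is black: it is not green and is an edge of
the convex hull of `R ∪ B`. -/
def IsBlackEdge (R B : Finset ℂ) (p q : ℂ) : Prop :=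
  p ∈ R ∧ q ∈ B ∧ ¬ IsGreenEdge R B p q ∧ IsHullEdge (↑R ∪ ↑B : Set ℂ) p q

/-- The bichromatic segment `p q` is red: it is neither green nor black and all
points of `T(p,q)` are red. -/
def IsRedEdge (R B : Finset ℂ) (p q : ℂ) : Prop :=
  p ∈ R ∧ q ∈ B ∧ ¬ IsGreenEdge R B p q ∧ ¬ IsHullEdge (↑R ∪ ↑B : Set ℂ) p q ∧
  ∀ t : ℂ, InT R B p q t → t ∈ R

/-- The bichromatic segment `p q` is blue: it is neither green nor black and
all points of `T(p,q)` are blue. -/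
def IsBlueEdge (R B : Finset ℂ) (p q : ℂ) : Prop :=
  p ∈ R ∧ q ∈ B ∧ ¬ IsGreenEdge R B p q ∧ ¬ IsHullEdge (↑R ∪ ↑B : Set ℂ) p q ∧
  ∀ t : ℂ, InT R B p q t → t ∈ B

/-- `R` and `B` are linearly separable: some line has all of `R` strictly on
one side and all of `B` strictly on the other side. -/
def LinSep (R B : Finset ℂ) : Prop :=
  ∃ (f : ℂ →ₗ[ℝ] ℝ) (c : ℝ), (∀ x ∈ R, f x < c) ∧ (∀ x ∈ B, c < f x)

/-- A finite point set is in (strictly) convex position. -/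
def ConvexPos (P : Set ℂ) : Prop :=
  ∀ x ∈ P, x ∉ convexHull ℝ (P \ {x})

/-- `{a, b, c, d}` is the vertex set of a balanced convex 4-hole of `R ∪ B`:
four pairwise distinct points in convex position, all in `R ∪ B`, exactly two
red and two blue, whose open interior (the interior of their convex hull)
contains no point of `R ∪ B`. -/
def IsBalancedConvex4Hole (R B : Finset ℂ) (a b c d : ℂ) : Prop :=
  List.Pairwise (· ≠ ·) [a, b, c, d] ∧
  ConvexPos ({a, b, c, d} : Set ℂ) ∧
  ({a, b, c, d} : Set ℂ) ⊆ (↑R ∪ ↑B : Set ℂ) ∧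
  (({a, b, c, d} : Set ℂ) ∩ ↑R).ncard = 2 ∧
  (({a, b, c, d} : Set ℂ) ∩ ↑B).ncard = 2 ∧
  ∀ x ∈ (↑R ∪ ↑B : Set ℂ), x ∉ interior (convexHull ℝ ({a, b, c, d} : Set ℂ))

/-- The open wedge `W(a,b,c)`: the open convex region bounded by the rays
`a → b` and `a → c`. -/
def wedge (a b c : ℂ) : Set ℂ :=
  {x | ∃ s t : ℝ, 0 < s ∧ 0 < t ∧ x = a + s • (b - a) + t • (c - a)}

/-- The open triangle `Δ a b c`. -/
def openTriangle (a b c : ℂ) : Set ℂ :=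
  interior (convexHull ℝ ({a, b, c} : Set ℂ))

/-- The edge `u v` of `CH(R)` and the edge `w z` of `CH(B)` see each other:
the union of their vertex sets is the vertex set of a balanced convex 4-hole
whose interior intersects neither `CH(R)` nor `CH(B)`. -/
def SeeEachOther (R B : Finset ℂ) (u v w z : ℂ) : Prop :=
  IsHullEdge (↑R : Set ℂ) u v ∧ IsHullEdge (↑B : Set ℂ) w z ∧
  IsBalancedConvex4Hole R B u v w z ∧
  interior (convexHull ℝ ({u, v, w, z} : Set ℂ)) ∩ convexHull ℝ (↑R : Set ℂ) = ∅ ∧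
  interior (convexHull ℝ ({u, v, w, z} : Set ℂ)) ∩ convexHull ℝ (↑B : Set ℂ) = ∅

/-- Condition C1: some edge of `CH(R)` and some edge of `CH(B)` see each
other. -/
def CondC1 (R B : Finset ℂ) : Prop :=
  ∃ u v w z : ℂ, SeeEachOther R B u v w z

/-- Condition C2: there exist an edge `u v` of `CH(R)` and points `b, z ∈ B`
with `z` in the open triangle `Δ u v b`, no red point in `Δ u v b`, and some
red point in the wedge `W(b,u,v)`; or the same with `R` and `B` swapped. -/
def CondC2 (R B : Finset ℂ) : Prop :=
  (∃ u v : ℂ, IsHullEdge (↑R : Set ℂ) u v ∧ ∃ b ∈ B, ∃ z ∈ B,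
      z ∈ openTriangle u v b ∧ (∀ x ∈ R, x ∉ openTriangle u v b) ∧
      ∃ x ∈ R, (x : ℂ) ∈ wedge b u v) ∨
  (∃ u v : ℂ, IsHullEdge (↑B : Set ℂ) u v ∧ ∃ r ∈ R, ∃ z ∈ R,
      z ∈ openTriangle u v r ∧ (∀ x ∈ B, x ∉ openTriangle u v r) ∧
      ∃ x ∈ B, (x : ℂ) ∈ wedge r u v)

/-- The boundary of the closed polygon with vertices `v 0, …, v (m-1)` in
cyclic order. -/
def PolyBdry (m : ℕ) (v : ℕ → ℂ) : Set ℂ :=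
  ⋃ i ∈ Finset.range m, segment ℝ (v i) (v ((i + 1) % m))

/-- The polygon with vertices `v 0, …, v (m-1)` in cyclic order is simple:
the vertices are distinct, consecutive edges meet exactly at their common
vertex, and non-consecutive edges are disjoint. -/
def IsSimplePoly (m : ℕ) (v : ℕ → ℂ) : Prop :=
  Set.InjOn v {i | i < m} ∧
  ∀ i < m, ∀ j < m, i ≠ j →
    (j = (i + 1) % m →
      segment ℝ (v i) (v ((i + 1) % m)) ∩ segment ℝ (v j) (v ((j + 1) % m)) = {v j}) ∧
    (j ≠ (i + 1) % m → i ≠ (j + 1) % m →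
      segment ℝ (v i) (v ((i + 1) % m)) ∩ segment ℝ (v j) (v ((j + 1) % m)) = ∅)

/-- The interior of a simple polygon: the union of the bounded connected
components of the complement of its boundary. -/
def PolyInterior (m : ℕ) (v : ℕ → ℂ) : Set ℂ :=
  {x | x ∉ PolyBdry m v ∧
    Bornology.IsBounded (connectedComponentIn (PolyBdry m v)ᶜ x)}

/-- 2D cross product. -/
def cross2 (u v : ℂ) : ℝ := u.re * v.im - u.im * v.re

/-- Signed area functional of `x` w.r.t. the directed line `p → q`. -/
def sig (p q x : ℂ) : ℝ := cross2 (q - p) (x - p)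

lemma cross2_smul_right (u v : ℂ) (t : ℝ) : cross2 u (t • v) = t * cross2 u v := by
  simp [cross2, Complex.smul_re, Complex.smul_im]; ring

lemma cross2_add_right (u v w : ℂ) : cross2 u (v + w) = cross2 u v + cross2 u w := by
  simp [cross2]; ring

lemma sig_affine (p q x y : ℂ) (s t : ℝ) (hst : s + t = 1) :
    sig p q (s • x + t • y) = s * sig p q x + t * sig p q y := by
  simp only [sig, cross2, Complex.sub_re, Complex.sub_im, Complex.add_re, Complex.add_im,
    Complex.smul_re, Complex.smul_im, smul_eq_mul]
  have h : t = 1 - s := by linarith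
  subst h; ring

lemma sig_self_left (p q : ℂ) : sig p q p = 0 := by simp [sig, cross2]

lemma sig_self_right (p q : ℂ) : sig p q q = 0 := by simp [sig, cross2]; ring

lemma pair_zero_of_cross2 {u v : ℂ} (h : cross2 u v ≠ 0) {s t : ℝ}
    (hst : s • u + t • v = 0) : s = 0 ∧ t = 0 := by
  have hre : s * u.re + t * v.re = 0 := by
    have := congrArg Complex.re hst
    simpa [Complex.add_re, Complex.smul_re] using this
  have him : s * u.im + t * v.im = 0 := by
    have := congrArg Complex.im hst
    simpa [Complex.add_im, Complex.smul_im] using this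
  have hs : s * cross2 u v = 0 := by
    have : s * (u.re * v.im - u.im * v.re) = (s * u.re) * v.im - (s * u.im) * v.re := by ring
    rw [cross2, this]
    rw [show s * u.re = -(t * v.re) by linarith, show s * u.im = -(t * v.im) by linarith]
    ring
  have hs0 : s = 0 := by
    rcases mul_eq_zero.mp hs with h1 | h1
    · exact h1
    · exact absurd h1 h
  constructor
  · exact hs0
  · subst hs0
    have hv : v ≠ 0 := by
      rintro rfl; simp [cross2] at h
    by_contra ht0
    apply hv
    have h1 : v.re = 0 := by
      rcases mul_eq_zero.mp (by linarith : t * v.re = 0) with h | h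
      · exact absurd h ht0
      · exact h
    have h2 : v.im = 0 := by
      rcases mul_eq_zero.mp (by linarith : t * v.im = 0) with h | h
      · exact absurd h ht0
      · exact h
    exact Complex.ext h1 h2

lemma collinear_of_sig_eq_zero {p q x : ℂ} (hpq : p ≠ q) (h : sig p q x = 0) :
    Collinear ℝ ({p, q, x} : Set ℂ) := by
  have hu : q - p ≠ 0 := sub_ne_zero.mpr (Ne.symm hpq)
  -- x - p = t • (q - p)
  set u := q - p with hu'
  set v := x - p with hv'
  have hnorm : u.re * u.re + u.im * u.im ≠ 0 := by
    intro h0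
    apply hu
    have h1 : u.re = 0 := by nlinarith [sq_nonneg u.re, sq_nonneg u.im]
    have h2 : u.im = 0 := by nlinarith [sq_nonneg u.re, sq_nonneg u.im]
    exact Complex.ext h1 h2
  have hcross : u.re * v.im = u.im * v.re := by
    have : u.re * v.im - u.im * v.re = 0 := h
    linarith
  set t := (u.re * v.re + u.im * v.im) / (u.re * u.re + u.im * u.im) with ht
  have hvt : v = t • u := by
    apply Complex.ext
    · rw [Complex.smul_re, smul_eq_mul, ht, div_mul_eq_mul_div, eq_div_iff hnorm]
      linear_combination (-u.im) * hcross
    · rw [Complex.smul_im, smul_eq_mul, ht, div_mul_eq_mul_div, eq_div_iff hnorm]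
      linear_combination u.re * hcross
  apply collinear_iff_of_mem (Set.mem_insert p _) |>.mpr
  refine ⟨u, ?_⟩
  rintro y (rfl | rfl | rfl)
  · exact ⟨0, by simp⟩
  · exact ⟨1, by simp [hu']⟩
  · exact ⟨t, by rw [← hvt, hv']; simp⟩

lemma sig_eq_zero_of_collinear {p q x : ℂ} (h : Collinear ℝ ({p, q, x} : Set ℂ)) :
    sig p q x = 0 := by
  obtain ⟨v, hv⟩ := (collinear_iff_of_mem (Set.mem_insert p ({q, x} : Set ℂ))).mp h
  obtain ⟨tq, hq⟩ := hv q (by simp)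
  obtain ⟨tx, hx⟩ := hv x (by simp)
  have h1 : q - p = tq • v := by rw [hq]; simp
  have h2 : x - p = tx • v := by rw [hx]; simp
  simp [sig, h1, h2, cross2, Complex.smul_re, Complex.smul_im]
  ring

lemma sig_ne_zero {S : Set ℂ} (hgp : GenPos S) {p q x : ℂ} (hp : p ∈ S) (hq : q ∈ S)
    (hx : x ∈ S) (hpq : p ≠ q) (hpx : p ≠ x) (hqx : q ≠ x) : sig p q x ≠ 0 :=
  fun h => hgp p hp q hq x hx hpq hpx hqx (collinear_of_sig_eq_zero hpq h)
lemma mem_segment_iff' {u v x : ℂ} :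
    x ∈ segment ℝ u v ↔ ∃ t : ℝ, 0 ≤ t ∧ t ≤ 1 ∧ x = (1 - t) • u + t • v := by
  rw [segment_eq_image]
  constructor
  · rintro ⟨t, ⟨h0, h1⟩, rfl⟩; exact ⟨t, h0, h1, rfl⟩
  · rintro ⟨t, h0, h1, rfl⟩; exact ⟨t, ⟨h0, h1⟩, rfl⟩

lemma sig_mem_segment {p q u v x : ℂ} (hx : x ∈ segment ℝ u v) :
    ∃ t : ℝ, 0 ≤ t ∧ t ≤ 1 ∧ sig p q x = (1 - t) * sig p q u + t * sig p q v := by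
  obtain ⟨t, h0, h1, rfl⟩ := mem_segment_iff'.mp hx
  exact ⟨t, h0, h1, sig_affine p q u v (1 - t) t (by ring)⟩

/-- On a segment from `p`, `sig p q` vanishes only at `p`, provided it is
nonzero at the other endpoint. -/
lemma sig_zero_on_segment {p q u v x : ℂ} (hu : sig p q u = 0) (hv : sig p q v ≠ 0)
    (hx : x ∈ segment ℝ u v) (hsig : sig p q x = 0) : x = u := by
  obtain ⟨t, h0, h1, rfl⟩ := mem_segment_iff'.mp hx
  rw [sig_affine p q u v (1 - t) t (by ring), hu] at hsig
  have ht : t = 0 := by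
    rcases mul_eq_zero.mp (by linarith : t * sig p q v = 0) with h | h
    · exact h
    · exact absurd h hv
  subst ht; simp

lemma sig_nonneg_on_segment {p q u v x : ℂ} (hu : sig p q u = 0) (hv : 0 < sig p q v)
    (hx : x ∈ segment ℝ u v) : 0 ≤ sig p q x := by
  obtain ⟨t, h0, h1, hs⟩ := sig_mem_segment (p := p) (q := q) hx
  rw [hu] at hs; nlinarith

lemma sig_nonpos_on_segment {p q u v x : ℂ} (hu : sig p q u = 0) (hv : sig p q v < 0)
    (hx : x ∈ segment ℝ u v) : sig p q x ≤ 0 := by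
  obtain ⟨t, h0, h1, hs⟩ := sig_mem_segment (p := p) (q := q) hx
  rw [hu] at hs; nlinarith

/-- Two segments sharing the endpoint `v`, whose other endpoints are not
collinear with `v`, meet exactly in `v`. -/
lemma segment_inter_segment {u v w : ℂ} (h : ¬ Collinear ℝ ({v, u, w} : Set ℂ)) :
    segment ℝ u v ∩ segment ℝ v w = {v} := by
  have hvu : v ≠ u := by
    rintro rfl
    exact h (by simpa using collinear_pair ℝ v w)
  have hcr : cross2 (u - v) (w - v) ≠ 0 := by
    intro h0
    exact h (collinear_of_sig_eq_zero hvu h0)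
  apply Set.eq_singleton_iff_unique_mem.mpr
  constructor
  · exact ⟨right_mem_segment ℝ u v, left_mem_segment ℝ v w⟩
  · rintro x ⟨hx1, hx2⟩
    obtain ⟨s, hs0, hs1, hxs⟩ := mem_segment_iff'.mp hx1
    obtain ⟨t, ht0, ht1, hxt⟩ := mem_segment_iff'.mp hx2
    have key : (1 - s) • (u - v) + (-t) • (w - v) = 0 := by
      have h1 : x - v = (1 - s) • (u - v) := by
        rw [hxs]
        apply Complex.ext <;>
          simp [Complex.smul_re, Complex.smul_im, Complex.add_re, Complex.add_im,
            Complex.sub_re, Complex.sub_im] <;> ring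
      have h2 : x - v = t • (w - v) := by
        rw [hxt]
        apply Complex.ext <;>
          simp [Complex.smul_re, Complex.smul_im, Complex.add_re, Complex.add_im,
            Complex.sub_re, Complex.sub_im] <;> ring
      rw [← h1, neg_smul, ← h2]
      ring_nf
    obtain ⟨h1, h2⟩ := pair_zero_of_cross2 hcr key
    have hs : s = 1 := by linarith
    rw [hxs, hs]; simp

/-- Points of the open triangle are strictly on the same side of the line `pq`
as the vertex `a`. -/
lemma sig_pos_of_mem_openTriangle {p q a z : ℂ} (ha : sig p q a ≠ 0)
    (hz : z ∈ openTriangle p q a) : sig p q z * sig p q a > 0 := by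
  set c := sig p q a with hc
  -- the closed halfplane is convex and contains the triangle
  have hsub : convexHull ℝ ({p, q, a} : Set ℂ) ⊆ {y | 0 ≤ sig p q y * c} := by
    apply convexHull_min
    · rintro y (rfl | rfl | rfl)
      · simp [sig_self_left]
      · simp [sig_self_right]
      · simp only [Set.mem_setOf_eq]; rw [← hc]; exact mul_self_nonneg c
    · intro y1 hy1 y2 hy2 s t hs ht hst
      simp only [Set.mem_setOf_eq] at *
      rw [sig_affine p q y1 y2 s t hst]
      nlinarith
  have hz0 : 0 ≤ sig p q z * c := hsub (interior_subset hz)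
  by_contra hle
  push_neg at hle
  have hzc : sig p q z * c = 0 := le_antisymm hle hz0
  -- perturb z against the halfplane
  have hqp : q - p ≠ 0 := by
    intro h0
    rw [sub_eq_zero] at h0
    rw [hc] at ha
    apply ha
    rw [h0]
    simp [sig, cross2]
  have hN : 0 < (q - p).re ^ 2 + (q - p).im ^ 2 := by
    by_contra hle'
    push_neg at hle'
    have h1 : (q - p).re = 0 := by nlinarith [sq_nonneg (q-p).re, sq_nonneg (q-p).im]
    have h2 : (q - p).im = 0 := by nlinarith [sq_nonneg (q-p).re, sq_nonneg (q-p).im]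
    exact hqp (by apply Complex.ext <;> simp [h1, h2])
  set d : ℂ := (-c) • (Complex.I * (q - p)) with hd
  have hcross_d : cross2 (q - p) d = -c * ((q - p).re ^ 2 + (q - p).im ^ 2) := by
    simp [hd, cross2, Complex.smul_re, Complex.smul_im, Complex.mul_re, Complex.mul_im]
    ring
  have hdnorm : 0 < ‖d‖ := by
    rw [norm_pos_iff]
    intro h0
    rw [hd, smul_eq_zero] at h0
    rcases h0 with h0 | h0
    · exact ha (neg_eq_zero.mp h0)
    · rcases mul_eq_zero.mp h0 with h | h
      · exact Complex.I_ne_zero h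
      · exact hqp h
  -- z is in the interior of the triangle hull, so a small ball is inside
  have hz' := hz
  rw [openTriangle, mem_interior_iff_mem_nhds, Metric.mem_nhds_iff] at hz'
  obtain ⟨ε, hε, hball⟩ := hz'
  set δ : ℝ := ε / (2 * ‖d‖) with hδ
  have hδ0 : 0 < δ := div_pos hε (mul_pos two_pos hdnorm)
  have hmem : z + δ • d ∈ convexHull ℝ ({p, q, a} : Set ℂ) := by
    apply hball
    simp only [Metric.mem_ball, dist_eq_norm]
    have : z + δ • d - z = δ • d := by ring
    rw [this, norm_smul]
    simp only [Real.norm_eq_abs, abs_of_pos hδ0, hδ]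
    rw [abs_of_pos (div_pos hε (mul_pos two_pos hdnorm)), div_mul_eq_mul_div]
    rw [div_lt_iff₀ (by positivity)]
    nlinarith
  have hval : sig p q (z + δ • d) = sig p q z + δ * cross2 (q - p) d := by
    simp only [sig]
    have : z + δ • d - p = (z - p) + δ • d := by ring
    rw [this, cross2_add_right, cross2_smul_right]
  have hfin := hsub hmem
  simp only [Set.mem_setOf_eq, hval, hcross_d] at hfin
  have hc2 : 0 < c ^ 2 := pow_two_pos_of_ne_zero ha
  have hexp : (sig p q z + δ * (-c * ((q - p).re ^ 2 + (q - p).im ^ 2))) * c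
      = sig p q z * c - δ * ((q - p).re ^ 2 + (q - p).im ^ 2) * c ^ 2 := by ring
  rw [hexp] at hfin
  linarith [mul_pos (mul_pos hδ0 hN) hc2]

lemma tst2 : True := trivial
lemma hull3_combo {p q a x : ℂ} (hx : x ∈ convexHull ℝ ({p, q, a} : Set ℂ)) :
    ∃ α β γ : ℝ, 0 ≤ α ∧ 0 ≤ β ∧ 0 ≤ γ ∧ α + β + γ = 1 ∧ x = α • p + β • q + γ • a := by
  rw [show ({p, q, a} : Set ℂ) = insert p {q, a} from rfl,
    convexHull_insert ⟨q, by simp⟩, mem_convexJoin] at hx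
  obtain ⟨p', hp', z, hz, hxz⟩ := hx
  rw [Set.mem_singleton_iff] at hp'
  subst hp'
  rw [convexHull_pair] at hz
  obtain ⟨s, hs0, hs1, rfl⟩ := mem_segment_iff'.mp hz
  obtain ⟨u, hu0, hu1, rfl⟩ := mem_segment_iff'.mp hxz
  refine ⟨1 - u, u * (1 - s), u * s, by linarith, ?_, ?_, by ring, ?_⟩
  · nlinarith
  · nlinarith
  · rw [smul_add, smul_smul, smul_smul, add_assoc]

lemma collinear_of_affine_pair {u v x : ℂ} (huv : u ≠ v) {s t : ℝ} (hst : s + t = 1)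
    (hx : x = s • u + t • v) : Collinear ℝ ({u, v, x} : Set ℂ) := by
  apply collinear_of_sig_eq_zero huv
  rw [hx, sig_affine u v u v s t hst, sig_self_left, sig_self_right]
  ring

lemma combo_mem_openTriangle {p q a : ℂ} (h : ¬ Collinear ℝ ({p, q, a} : Set ℂ))
    {α β γ : ℝ} (hα : 0 < α) (hβ : 0 < β) (hγ : 0 < γ) (hsum : α + β + γ = 1) :
    α • p + β • q + γ • a ∈ openTriangle p q a := by
  have hind : AffineIndependent ℝ ![p, q, a] :=
    affineIndependent_iff_not_collinear_set.mpr h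
  have htot : affineSpan ℝ (Set.range ![p, q, a]) = ⊤ := by
    rw [hind.affineSpan_eq_top_iff_card_eq_finrank_add_one]
    simp [Complex.finrank_real_complex]
  let b : AffineBasis (Fin 3) ℝ ℂ := ⟨![p, q, a], hind, htot⟩
  have hrange : Set.range ⇑b = ({p, q, a} : Set ℂ) := by
    show Set.range ![p, q, a] = _
    ext z
    simp [Matrix.range_cons, Matrix.range_empty]
    tauto
  set w : Fin 3 → ℝ := ![α, β, γ] with hw
  have hwsum : ∑ i : Fin 3, w i = 1 := by simp [hw, Fin.sum_univ_three]; linarith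
  have hcomb : α • p + β • q + γ • a = Finset.univ.affineCombination ℝ ![p, q, a] w := by
    rw [Finset.affineCombination_eq_linear_combination _ _ _ hwsum]
    simp [hw, Fin.sum_univ_three]
  rw [openTriangle, ← hrange, b.interior_convexHull]
  intro i
  have : b.coord i (Finset.univ.affineCombination ℝ ![p, q, a] w) = w i :=
    b.coord_apply_combination_of_mem (Finset.mem_univ i) hwsum
  rw [hcomb]
  show 0 < b.coord i (Finset.univ.affineCombination ℝ ![p, q, a] w)
  rw [this]
  fin_cases i <;> simpa [hw]

/-- A point of the closed triangle that is not collinear with any two vertices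
lies in the open triangle. -/
lemma mem_openTriangle_of_mem_hull {p q a x : ℂ}
    (h : ¬ Collinear ℝ ({p, q, a} : Set ℂ))
    (h1 : ¬ Collinear ℝ ({p, q, x} : Set ℂ))
    (h2 : ¬ Collinear ℝ ({p, a, x} : Set ℂ))
    (h3 : ¬ Collinear ℝ ({q, a, x} : Set ℂ))
    (hx : x ∈ convexHull ℝ ({p, q, a} : Set ℂ)) : x ∈ openTriangle p q a := by
  obtain ⟨α, β, γ, hα, hβ, hγ, hsum, hcomb⟩ := hull3_combo hx
  have hpq : p ≠ q := ne₁₂_of_not_collinear h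
  have hpa : p ≠ a := ne₁₃_of_not_collinear h
  have hqa : q ≠ a := ne₂₃_of_not_collinear h
  rcases eq_or_lt_of_le hα with hα0 | hα0
  · exfalso
    apply h3
    exact collinear_of_affine_pair hqa (s := β) (t := γ) (by linarith)
      (by rw [hcomb, ← hα0]; simp)
  rcases eq_or_lt_of_le hβ with hβ0 | hβ0
  · exfalso
    apply h2
    exact collinear_of_affine_pair hpa (s := α) (t := γ) (by linarith)
      (by rw [hcomb, ← hβ0]; simp)
  rcases eq_or_lt_of_le hγ with hγ0 | hγ0
  · exfalso
    apply h1
    exact collinear_of_affine_pair hpq (s := α) (t := β) (by linarith)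
      (by rw [hcomb, ← hγ0]; simp)
  rw [hcomb]
  exact combo_mem_openTriangle h hα0 hβ0 hγ0 hsum

/-- Walking along the ray from `m` through `x` (beyond `x`) stays outside any
set that is star-shaped with respect to `m` and avoids `x`. -/
lemma ray_not_mem {K : Set ℂ} {m x : ℂ} (hstar : ∀ y ∈ K, segment ℝ m y ⊆ K)
    (hx : x ∉ K) {t : ℝ} (ht : 0 ≤ t) : x + t • (x - m) ∉ K := by
  intro hy
  apply hx
  apply hstar _ hy
  rw [mem_segment_iff']
  refine ⟨1 / (1 + t), by positivity, ?_, ?_⟩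
  · rw [div_le_one (by linarith)]; linarith
  · have h1t : (1 : ℝ) + t ≠ 0 := by linarith
    apply Complex.ext <;>
      simp only [Complex.add_re, Complex.add_im, Complex.smul_re, Complex.smul_im,
        Complex.sub_re, Complex.sub_im, smul_eq_mul] <;>
      field_simp <;> ring

lemma not_bounded_component {x m : ℂ} (hxm : x ≠ m) {F : Set ℂ}
    (hF : ∀ t : ℝ, 0 ≤ t → x + t • (x - m) ∈ F) :
    ¬ Bornology.IsBounded (connectedComponentIn F x) := by
  intro hb
  set ray : Set ℂ := (fun t : ℝ => x + t • (x - m)) '' Set.Ici 0 with hray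
  have hcont : Continuous fun t : ℝ => x + t • (x - m) := by continuity
  have hconn : IsPreconnected ray := isPreconnected_Ici.image _ hcont.continuousOn
  have hxray : x ∈ ray := ⟨0, Set.self_mem_Ici, by simp⟩
  have hsub : ray ⊆ F := by rintro y ⟨t, ht, rfl⟩; exact hF t ht
  have hrayc := hconn.subset_connectedComponentIn hxray hsub
  have hbray : Bornology.IsBounded ray := hb.subset hrayc
  obtain ⟨C, hC⟩ := isBounded_iff_forall_norm_le.mp hbray
  have hpos : 0 < ‖x - m‖ := by
    rw [norm_pos_iff]; exact sub_ne_zero.mpr hxm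
  set t := (C + ‖x‖ + 1) / ‖x - m‖ with htdef
  have ht0 : 0 ≤ t := by
    apply div_nonneg _ (le_of_lt hpos)
    have := norm_nonneg x
    have hC0 : 0 ≤ C := le_trans (norm_nonneg x) (hC x hxray)
    linarith
  have hmem : x + t • (x - m) ∈ ray := ⟨t, ht0, rfl⟩
  have hle := hC _ hmem
  have : ‖t • (x - m)‖ ≤ ‖x + t • (x - m)‖ + ‖x‖ := by
    calc ‖t • (x - m)‖ = ‖x + t • (x - m) - x‖ := by rw [add_sub_cancel_left]
      _ ≤ ‖x + t • (x - m)‖ + ‖x‖ := norm_sub_le _ _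
  rw [norm_smul, Real.norm_eq_abs, abs_of_nonneg ht0, htdef,
    div_mul_cancel₀ _ (ne_of_gt hpos)] at this
  linarith

lemma tst3 : True := trivial
section Master

variable {R B : Finset ℂ}

set_option maxHeartbeats 1000000 in
lemma master_lemma (hgp : GenPos (↑R ∪ ↑B : Set ℂ)) {p q a b : ℂ}
    (hp : p ∈ (↑R ∪ ↑B : Set ℂ)) (hq : q ∈ (↑R ∪ ↑B : Set ℂ))
    (ha : a ∈ (↑R ∪ ↑B : Set ℂ)) (hb : b ∈ (↑R ∪ ↑B : Set ℂ)) (hpq : p ≠ q)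
    (hsa : 0 < sig p q a) (hsb : sig p q b < 0)
    (hea : openTriangle p q a ∩ (↑R ∪ ↑B : Set ℂ) = ∅)
    (heb : openTriangle p q b ∩ (↑R ∪ ↑B : Set ℂ) = ∅)
    (hcR : (({a, p, b, q} : Set ℂ) ∩ ↑R).ncard = 2)
    (hcB : (({a, p, b, q} : Set ℂ) ∩ ↑B).ncard = 2) :
    IsBalanced4Hole R B a p b q := by
  set S : Set ℂ := (↑R ∪ ↑B : Set ℂ) with hS
  -- distinctness
  have hap : a ≠ p := fun h => by rw [h, sig_self_left] at hsa; exact lt_irrefl 0 hsa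
  have haq : a ≠ q := fun h => by rw [h, sig_self_right] at hsa; exact lt_irrefl 0 hsa
  have hbp : b ≠ p := fun h => by rw [h, sig_self_left] at hsb; exact lt_irrefl 0 hsb
  have hbq : b ≠ q := fun h => by rw [h, sig_self_right] at hsb; exact lt_irrefl 0 hsb
  have hab : a ≠ b := fun h => by rw [h] at hsa; linarith
  -- noncollinearity facts
  have nc : ∀ x y z : ℂ, x ∈ S → y ∈ S → z ∈ S → x ≠ y → x ≠ z → y ≠ z →
      ¬ Collinear ℝ ({x, y, z} : Set ℂ) := fun x y z hx hy hz h1 h2 h3 =>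
    hgp x hx y hy z hz h1 h2 h3
  have nc_pqa : ¬ Collinear ℝ ({p, q, a} : Set ℂ) := nc p q a hp hq ha hpq (Ne.symm hap) (Ne.symm haq)
  have nc_pqb : ¬ Collinear ℝ ({p, q, b} : Set ℂ) := nc p q b hp hq hb hpq (Ne.symm hbp) (Ne.symm hbq)
  -- the union of the two closed triangles
  set K : Set ℂ := convexHull ℝ ({p, q, a} : Set ℂ) ∪ convexHull ℝ ({p, q, b} : Set ℂ) with hK
  have hBdrysub : QuadBdry a p b q ⊆ K := by
    rintro x (((hx | hx) | hx) | hx)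
    · exact Or.inl (segment_subset_convexHull (by simp) (by simp) hx)
    · exact Or.inr (segment_subset_convexHull (by simp) (by simp) hx)
    · exact Or.inr (segment_subset_convexHull (by simp) (by simp) hx)
    · exact Or.inl (segment_subset_convexHull (by simp) (by simp) hx)
  set m : ℂ := (1/2 : ℝ) • p + (1/2 : ℝ) • q with hm
  have hmseg : m ∈ segment ℝ p q := by
    rw [mem_segment_iff']
    refine ⟨1/2, by norm_num, by norm_num, ?_⟩
    rw [hm]; norm_num
  have hm1 : m ∈ convexHull ℝ ({p, q, a} : Set ℂ) :=
    segment_subset_convexHull (by simp) (by simp) hmseg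
  have hm2 : m ∈ convexHull ℝ ({p, q, b} : Set ℂ) :=
    segment_subset_convexHull (by simp) (by simp) hmseg
  have hstar : ∀ y ∈ K, segment ℝ m y ⊆ K := by
    rintro y (hy | hy)
    · exact fun z hz => Or.inl ((convex_convexHull ℝ _).segment_subset hm1 hy hz)
    · exact fun z hz => Or.inr ((convex_convexHull ℝ _).segment_subset hm2 hy hz)
  -- any point of S other than the四 vertices is outside K
  have houtside : ∀ x ∈ S, x ≠ a → x ≠ p → x ≠ b → x ≠ q → x ∉ K := by
    intro x hx hxa hxp hxb hxq hxK
    rcases hxK with hxK | hxK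
    · have : x ∈ openTriangle p q a := by
        apply mem_openTriangle_of_mem_hull nc_pqa
        · exact nc p q x hp hq hx hpq (Ne.symm hxp) (Ne.symm hxq)
        · exact nc p a x hp ha hx (Ne.symm hap) (Ne.symm hxp) (Ne.symm hxa)
        · exact nc q a x hq ha hx (Ne.symm haq) (Ne.symm hxq) (Ne.symm hxa)
        · exact hxK
      exact Set.eq_empty_iff_forall_notMem.mp hea x ⟨this, hx⟩
    · have : x ∈ openTriangle p q b := by
        apply mem_openTriangle_of_mem_hull nc_pqb
        · exact nc p q x hp hq hx hpq (Ne.symm hxp) (Ne.symm hxq)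
        · exact nc p b x hp hb hx (Ne.symm hbp) (Ne.symm hxp) (Ne.symm hxb)
        · exact nc q b x hq hb hx (Ne.symm hbq) (Ne.symm hxq) (Ne.symm hxb)
        · exact hxK
      exact Set.eq_empty_iff_forall_notMem.mp heb x ⟨this, hx⟩
  -- vertices are on the boundary
  have hvert : ∀ v ∈ ({a, p, b, q} : Set ℂ), v ∈ QuadBdry a p b q := by
    rintro v (rfl | rfl | rfl | rfl)
    · exact Or.inl (Or.inl (Or.inl (left_mem_segment ℝ _ _)))
    · exact Or.inl (Or.inl (Or.inr (left_mem_segment ℝ _ _)))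
    · exact Or.inl (Or.inr (left_mem_segment ℝ _ _))
    · exact Or.inr (left_mem_segment ℝ _ _)
  refine ⟨?_, ?_, hcR, hcB, ?_⟩
  · -- IsSimpleQuad
    refine ⟨?_, ?_, ?_, ?_, ?_, ?_, ?_⟩
    · -- pairwise distinct
      refine List.Pairwise.cons ?_ (List.Pairwise.cons ?_ (List.Pairwise.cons ?_
        (List.pairwise_singleton _ _)))
      · intro y hy
        simp only [List.mem_cons, List.mem_singleton, List.not_mem_nil, or_false] at hy
        rcases hy with rfl | rfl | rfl
        exacts [hap, hab, haq]
      · intro y hy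
        simp only [List.mem_cons, List.mem_singleton, List.not_mem_nil, or_false] at hy
        rcases hy with rfl | rfl
        exacts [Ne.symm hbp, hpq]
      · intro y hy
        simp only [List.mem_singleton, List.mem_cons, List.not_mem_nil, or_false] at hy
        rcases hy with rfl
        exact hbq
    · -- seg a p ∩ seg p b = {p}
      exact segment_inter_segment (nc p a b hp ha hb (Ne.symm hap) (Ne.symm hbp) hab)
    · exact segment_inter_segment (nc b p q hb hp hq hbp hbq hpq)
    · exact segment_inter_segment (nc q b a hq hb ha (Ne.symm hbq) (Ne.symm haq) (Ne.symm hab))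
    · exact segment_inter_segment (nc a q p ha hq hp haq hap (Ne.symm hpq))
    · -- seg a p ∩ seg b q = ∅
      rw [Set.eq_empty_iff_forall_notMem]
      rintro x ⟨hx1, hx2⟩
      rw [segment_symm] at hx1
      have h1 : 0 ≤ sig p q x := sig_nonneg_on_segment (sig_self_left p q) hsa hx1
      rw [segment_symm] at hx2
      have h2 : sig p q x ≤ 0 := sig_nonpos_on_segment (sig_self_right p q) hsb hx2
      have h0 : sig p q x = 0 := le_antisymm h2 h1
      have hxp : x = p := sig_zero_on_segment (sig_self_left p q) (ne_of_gt hsa) hx1 h0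
      have hxq : x = q := sig_zero_on_segment (sig_self_right p q) (ne_of_lt hsb) hx2 h0
      exact hpq (hxp ▸ hxq)
    · -- seg p b ∩ seg q a = ∅
      rw [Set.eq_empty_iff_forall_notMem]
      rintro x ⟨hx1, hx2⟩
      have h1 : sig p q x ≤ 0 := sig_nonpos_on_segment (sig_self_left p q) hsb hx1
      have h2 : 0 ≤ sig p q x := sig_nonneg_on_segment (sig_self_right p q) hsa hx2
      have h0 : sig p q x = 0 := le_antisymm h1 h2
      have hxp : x = p := sig_zero_on_segment (sig_self_left p q) (ne_of_lt hsb) hx1 h0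
      have hxq : x = q := sig_zero_on_segment (sig_self_right p q) (ne_of_gt hsa) hx2 h0
      exact hpq (hxp ▸ hxq)
  · -- vertices in S
    rintro v (rfl | rfl | rfl | rfl) <;> assumption
  · -- empty interior
    intro x hx hxint
    obtain ⟨hxB, hxbd⟩ := hxint
    by_cases hva : x = a
    · exact hxB (hvert x (by rw [hva]; simp))
    by_cases hvp : x = p
    · exact hxB (hvert x (by rw [hvp]; simp))
    by_cases hvb : x = b
    · exact hxB (hvert x (by rw [hvb]; simp))
    by_cases hvq : x = q
    · exact hxB (hvert x (by rw [hvq]; simp))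
    have hxK : x ∉ K := houtside x hx hva hvp hvb hvq
    have hxm : x ≠ m := fun h => hxK (h ▸ hm1 |> Or.inl)
    refine not_bounded_component hxm ?_ hxbd
    intro t ht
    exact fun hmem => (ray_not_mem hstar hxK ht) (hBdrysub hmem)

end Master
section Vertices

open Classical in
/-- Every finite point set has a vertex (a point outside the convex hull of
the others) maximizing a given linear functional. -/
lemma exists_vertex (U : Finset ℂ) (hU : U.Nonempty) (c1 c2 : ℝ) :
    ∃ x ∈ U, (∀ y ∈ U, c1 * y.re + c2 * y.im ≤ c1 * x.re + c2 * x.im) ∧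
      x ∉ convexHull ℝ ((↑U : Set ℂ) \ {x}) := by
  set g : ℂ → ℝ := fun z => c1 * z.re + c2 * z.im with hg
  obtain ⟨x1, hx1U, hx1⟩ := U.exists_max_image g hU
  set T1 : Finset ℂ := U.filter (fun z => g z = g x1) with hT1
  have hT1ne : T1.Nonempty := ⟨x1, by simp [hT1, hx1U]⟩
  obtain ⟨x2, hx2T, hx2⟩ := T1.exists_max_image (fun z => z.re) hT1ne
  set T2 : Finset ℂ := T1.filter (fun z => z.re = x2.re) with hT2
  have hT2ne : T2.Nonempty := ⟨x2, by simp [hT2, hx2T]⟩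
  obtain ⟨x3, hx3T, hx3⟩ := T2.exists_max_image (fun z => z.im) hT2ne
  have hx3T1 : x3 ∈ T1 := (Finset.mem_filter.mp hx3T).1
  have hx3U : x3 ∈ U := (Finset.mem_filter.mp hx3T1).1
  have hgx3 : g x3 = g x1 := (Finset.mem_filter.mp hx3T1).2
  have hrex3 : x3.re = x2.re := (Finset.mem_filter.mp hx3T).2
  refine ⟨x3, hx3U, ?_, ?_⟩
  · intro y hy
    calc c1 * y.re + c2 * y.im ≤ c1 * x1.re + c2 * x1.im := hx1 y hy
      _ = c1 * x3.re + c2 * x3.im := by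
          have := hgx3; simp only [hg] at this; linarith
  · -- vertex property
    intro hhull
    rw [show ((↑U : Set ℂ) \ {x3}) = ↑(U.erase x3) by rw [Finset.coe_erase]] at hhull
    rw [Finset.convexHull_eq] at hhull
    obtain ⟨w, hw0, hwsum, hwx⟩ := hhull
    set E := U.erase x3 with hE
    rw [Finset.centerMass_eq_of_sum_1 _ _ hwsum] at hwx
    simp only [id] at hwx
    -- decompose along a linear functional
    have hlin : ∀ d1 d2 : ℝ, ∑ y ∈ E, w y * (d1 * y.re + d2 * y.im)
        = d1 * x3.re + d2 * x3.im := by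
      intro d1 d2
      have hre : (∑ y ∈ E, w y • y).re = ∑ y ∈ E, w y * y.re := by
        rw [Complex.re_sum]
        exact Finset.sum_congr rfl fun y _ => by rw [Complex.smul_re, smul_eq_mul]
      have him : (∑ y ∈ E, w y • y).im = ∑ y ∈ E, w y * y.im := by
        rw [Complex.im_sum]
        exact Finset.sum_congr rfl fun y _ => by rw [Complex.smul_im, smul_eq_mul]
      rw [hwx] at hre him
      have : ∑ y ∈ E, w y * (d1 * y.re + d2 * y.im)
          = d1 * (∑ y ∈ E, w y * y.re) + d2 * (∑ y ∈ E, w y * y.im) := by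
        rw [Finset.mul_sum, Finset.mul_sum, ← Finset.sum_add_distrib]
        exact Finset.sum_congr rfl fun y _ => by ring
      rw [this, ← hre, ← him]
    -- step lemma
    have hstep : ∀ f : ℂ → ℝ, (∀ y ∈ E, w y ≠ 0 → f y ≤ f x3) →
        (∑ y ∈ E, w y * f y = f x3) → ∀ y ∈ E, w y ≠ 0 → f y = f x3 := by
      intro f hle heq y hy hwy
      have hterms : ∀ z ∈ E, 0 ≤ w z * (f x3 - f z) := by
        intro z hz
        rcases eq_or_ne (w z) 0 with h | h
        · rw [h]; simp
        · have := hle z hz h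
          have h0 := hw0 z hz
          nlinarith [lt_of_le_of_ne h0 (Ne.symm h)]
      have hzero : ∑ z ∈ E, w z * (f x3 - f z) = 0 := by
        have : ∑ z ∈ E, w z * (f x3 - f z)
            = f x3 * (∑ z ∈ E, w z) - ∑ z ∈ E, w z * f z := by
          rw [Finset.mul_sum, ← Finset.sum_sub_distrib]
          exact Finset.sum_congr rfl fun z _ => by ring
        rw [this, hwsum, heq]; ring
      have := (Finset.sum_eq_zero_iff_of_nonneg hterms).mp hzero y hy
      rcases mul_eq_zero.mp this with h | h
      · exact absurd h hwy
      · linarith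
    -- stage 1 : support is in T1
    have hsupp1 : ∀ y ∈ E, w y ≠ 0 → g y = g x3 := by
      apply hstep g
      · intro y hy _
        calc g y ≤ g x1 := hx1 y (Finset.mem_of_mem_erase hy)
          _ = g x3 := hgx3.symm
      · simpa only [hg] using hlin c1 c2
    -- stage 2 : support has the same re
    have hsupp2 : ∀ y ∈ E, w y ≠ 0 → y.re = x3.re := by
      have := hstep (fun z => z.re) ?_ ?_
      · exact this
      · intro y hy hwy
        have hyT1 : y ∈ T1 := by
          rw [hT1, Finset.mem_filter]
          exact ⟨Finset.mem_of_mem_erase hy, by rw [hsupp1 y hy hwy, hgx3]⟩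
        calc y.re ≤ x2.re := hx2 y hyT1
          _ = x3.re := hrex3.symm
      · simpa using hlin 1 0
    -- stage 3 : support has the same im
    have hsupp3 : ∀ y ∈ E, w y ≠ 0 → y.im = x3.im := by
      have := hstep (fun z => z.im) ?_ ?_
      · exact this
      · intro y hy hwy
        have hyT1 : y ∈ T1 := by
          rw [hT1, Finset.mem_filter]
          exact ⟨Finset.mem_of_mem_erase hy, by rw [hsupp1 y hy hwy, hgx3]⟩
        have hyT2 : y ∈ T2 := by
          rw [hT2, Finset.mem_filter]
          exact ⟨hyT1, by rw [hsupp2 y hy hwy, hrex3]⟩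
        exact hx3 y hyT2
      · simpa using hlin 0 1
    -- a support element exists and must equal x3
    have hex : ∃ y ∈ E, w y ≠ 0 := by
      by_contra hno
      push_neg at hno
      rw [Finset.sum_eq_zero hno] at hwsum
      norm_num at hwsum
    obtain ⟨y, hy, hwy⟩ := hex
    have : y = x3 := Complex.ext (hsupp2 y hy hwy) (hsupp3 y hy hwy)
    exact (Finset.ne_of_mem_erase hy) this

/-- A finite point set in general position with at least 3 points has three
distinct vertices. -/
lemma three_vertices (U : Finset ℂ) (hgp : GenPos (↑U : Set ℂ)) (hcard : 3 ≤ U.card) :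
    ∃ x1 x2 x3 : ℂ, x1 ∈ U ∧ x2 ∈ U ∧ x3 ∈ U ∧ x1 ≠ x2 ∧ x1 ≠ x3 ∧ x2 ≠ x3 ∧
      x1 ∉ convexHull ℝ ((↑U : Set ℂ) \ {x1}) ∧
      x2 ∉ convexHull ℝ ((↑U : Set ℂ) \ {x2}) ∧
      x3 ∉ convexHull ℝ ((↑U : Set ℂ) \ {x3}) := by
  have hUne : U.Nonempty := Finset.card_pos.mp (by omega)
  obtain ⟨x1, hx1U, hmax1, hv1⟩ := exists_vertex U hUne 1 0
  obtain ⟨x2, hx2U, hmax2, hv2⟩ := exists_vertex U hUne (-1) 0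
  simp only [one_mul, zero_mul, add_zero, neg_mul, neg_le_neg_iff] at hmax1 hmax2
  have hne12 : x1 ≠ x2 := by
    intro h
    subst h
    -- all points have the same re, so any three are collinear
    have hall : ∀ y ∈ U, y.re = x1.re := fun y hy =>
      le_antisymm (hmax1 y hy) (hmax2 y hy)
    obtain ⟨u, hu⟩ := hUne
    have h2 : 2 ≤ (U.erase u).card := by
      rw [Finset.card_erase_of_mem hu]; omega
    obtain ⟨v, hv⟩ := Finset.card_pos.mp (by omega : 0 < (U.erase u).card)
    have h1' : 1 ≤ ((U.erase u).erase v).card := by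
      rw [Finset.card_erase_of_mem hv]; omega
    obtain ⟨t, ht⟩ := Finset.card_pos.mp (by omega : 0 < ((U.erase u).erase v).card)
    have htv : t ∈ U.erase u := Finset.mem_of_mem_erase ht
    have huv : u ≠ v := (Finset.ne_of_mem_erase hv).symm
    have hut : u ≠ t := (Finset.ne_of_mem_erase htv).symm
    have hvt : v ≠ t := (Finset.ne_of_mem_erase ht).symm
    have hvU : v ∈ U := Finset.mem_of_mem_erase hv
    have htU : t ∈ U := Finset.mem_of_mem_erase htv
    apply hgp u hu v hvU t htU huv hut hvt
    apply collinear_of_sig_eq_zero huv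
    simp only [sig, cross2, Complex.sub_re, Complex.sub_im]
    rw [hall u hu, hall v hvU, hall t htU]
    ring
  -- a third point not collinear with x1 x2
  have h1 : 1 ≤ ((U.erase x1).erase x2).card := by
    rw [Finset.card_erase_of_mem (Finset.mem_erase.mpr ⟨Ne.symm hne12, hx2U⟩),
      Finset.card_erase_of_mem hx1U]
    omega
  obtain ⟨y0, hy0⟩ := Finset.card_pos.mp (by omega : 0 < ((U.erase x1).erase x2).card)
  have hy0U : y0 ∈ U := Finset.mem_of_mem_erase (Finset.mem_of_mem_erase hy0)
  have hy01 : x1 ≠ y0 := (Finset.ne_of_mem_erase (Finset.mem_of_mem_erase hy0)).symm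
  have hy02 : x2 ≠ y0 := (Finset.ne_of_mem_erase hy0).symm
  have hs0 : sig x1 x2 y0 ≠ 0 := fun h =>
    hgp x1 hx1U x2 hx2U y0 hy0U hne12 hy01 hy02 (collinear_of_sig_eq_zero hne12 h)
  -- linear part of sig x1 x2
  set d1 : ℝ := -(x2 - x1).im with hd1
  set d2 : ℝ := (x2 - x1).re with hd2
  have hsiglin : ∀ z : ℂ, sig x1 x2 z
      = d1 * z.re + d2 * z.im + ((x2 - x1).im * x1.re - (x2 - x1).re * x1.im) := by
    intro z
    simp only [sig, cross2, Complex.sub_re, Complex.sub_im, hd1, hd2]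
    ring
  rcases lt_or_gt_of_ne hs0 with hneg | hpos
  · obtain ⟨x3, hx3U, hmax3, hv3⟩ := exists_vertex U hUne (-d1) (-d2)
    have hsx3 : sig x1 x2 x3 ≠ 0 := by
      have h := hmax3 y0 hy0U
      have e1 := hsiglin y0
      have e2 := hsiglin x3
      intro h0
      rw [h0] at e2
      nlinarith
    exact ⟨x1, x2, x3, hx1U, hx2U, hx3U, hne12,
      fun h => hsx3 (by rw [← h, sig_self_left]),
      fun h => hsx3 (by rw [← h, sig_self_right]), hv1, hv2, hv3⟩
  · obtain ⟨x3, hx3U, hmax3, hv3⟩ := exists_vertex U hUne d1 d2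
    have hsx3 : sig x1 x2 x3 ≠ 0 := by
      have h := hmax3 y0 hy0U
      have e1 := hsiglin y0
      have e2 := hsiglin x3
      intro h0
      rw [h0] at e2
      nlinarith
    exact ⟨x1, x2, x3, hx1U, hx2U, hx3U, hne12,
      fun h => hsx3 (by rw [← h, sig_self_left]),
      fun h => hsx3 (by rw [← h, sig_self_right]), hv1, hv2, hv3⟩

end Vertices
section BaseCase

lemma sig_lin (P Q z : ℂ) : sig P Q z
    = (-(Q - P).im) * z.re + (Q - P).re * z.im
      + ((Q - P).im * P.re - (Q - P).re * P.im) := by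
  simp only [sig, cross2, Complex.sub_re, Complex.sub_im]
  ring

lemma sig_rel4 {P Q w x y z : ℂ} {l0 l1 l2 l3 : ℝ}
    (heq : l0 • w + l1 • x + l2 • y + l3 • z = 0) (hsum : l0 + l1 + l2 + l3 = 0) :
    l0 * sig P Q w + l1 * sig P Q x + l2 * sig P Q y + l3 * sig P Q z = 0 := by
  have hre : l0 * w.re + l1 * x.re + l2 * y.re + l3 * z.re = 0 := by
    have := congrArg Complex.re heq
    simpa [Complex.add_re, Complex.smul_re] using this
  have him : l0 * w.im + l1 * x.im + l2 * y.im + l3 * z.im = 0 := by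
    have := congrArg Complex.im heq
    simpa [Complex.add_im, Complex.smul_im] using this
  rw [sig_lin P Q w, sig_lin P Q x, sig_lin P Q y, sig_lin P Q z]
  linear_combination (-(Q - P).im) * hre + (Q - P).re * him
    + ((Q - P).im * P.re - (Q - P).re * P.im) * hsum

lemma same_sign_opp {α β u v : ℝ} (h : α * u + β * v = 0) (hαβ : 0 < α * β)
    (hu : u ≠ 0) (hv : v ≠ 0) : u * v < 0 := by
  rcases lt_or_gt_of_ne (mul_ne_zero hu hv) with h' | h'
  · exact h'
  · exfalso
    nlinarith [sq_nonneg (β * v), sq_nonneg (α * u)]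

lemma openTriangle_comm₂₃ (p q a : ℂ) : openTriangle p q a = openTriangle p a q := by
  unfold openTriangle
  rw [Set.pair_comm q a]

lemma not_mem_openTriangle_apex {p q a : ℂ} (h : sig p a q ≠ 0) :
    a ∉ openTriangle p q a := by
  intro hz
  rw [openTriangle_comm₂₃] at hz
  have := sig_pos_of_mem_openTriangle h hz
  rw [sig_self_right] at this
  simp at this

/-- From a base pair whose two companions are strictly on opposite sides,
build a balanced configuration when the four points are all of `R ∪ B`. -/
lemma config_of_pair {R B : Finset ℂ} (hgp : GenPos (↑R ∪ ↑B : Set ℂ))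
    {P Q Y Z : ℂ}
    (hPQ : P ≠ Q) (hPY : P ≠ Y) (hPZ : P ≠ Z) (hQY : Q ≠ Y) (hQZ : Q ≠ Z) (hYZ : Y ≠ Z)
    (hSet : (↑R ∪ ↑B : Set ℂ) = ({P, Q, Y, Z} : Set ℂ))
    (hR2 : R.card = 2) (hB2 : B.card = 2)
    (hopp : sig P Q Y * sig P Q Z < 0) :
    ∃ p q a b : ℂ, p ∈ (↑R ∪ ↑B : Set ℂ) ∧ q ∈ (↑R ∪ ↑B : Set ℂ) ∧
      a ∈ (↑R ∪ ↑B : Set ℂ) ∧ b ∈ (↑R ∪ ↑B : Set ℂ) ∧ p ≠ q ∧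
      0 < sig p q a ∧ sig p q b < 0 ∧
      openTriangle p q a ∩ (↑R ∪ ↑B : Set ℂ) = ∅ ∧
      openTriangle p q b ∩ (↑R ∪ ↑B : Set ℂ) = ∅ ∧
      (({a, p, b, q} : Set ℂ) ∩ ↑R).ncard = 2 ∧
      (({a, p, b, q} : Set ℂ) ∩ ↑B).ncard = 2 := by
  set S : Set ℂ := (↑R ∪ ↑B : Set ℂ) with hS
  have hPS : P ∈ S := by rw [hSet]; simp
  have hQS : Q ∈ S := by rw [hSet]; simp
  have hYS : Y ∈ S := by rw [hSet]; simp
  have hZS : Z ∈ S := by rw [hSet]; simp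
  have nc : ∀ x y z : ℂ, x ∈ S → y ∈ S → z ∈ S → x ≠ y → x ≠ z → y ≠ z →
      sig x y z ≠ 0 := by
    intro x y z hx hy hz h1 h2 h3 h0
    exact hgp x hx y hy z hz h1 h2 h3 (collinear_of_sig_eq_zero h1 h0)
  -- emptiness of the two triangles (for either labelling of Y, Z)
  have hempty : ∀ W W' : ℂ, W = Y ∧ W' = Z ∨ W = Z ∧ W' = Y →
      openTriangle P Q W ∩ S = ∅ := by
    rintro W W' (⟨rfl, rfl⟩ | ⟨rfl, rfl⟩) <;>
    · rw [Set.eq_empty_iff_forall_notMem]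
      rintro v ⟨hvtri, hvS⟩
      have hsigW : sig P Q v * sig P Q W ≠ 0 → v ≠ P ∧ v ≠ Q := by
        intro hne
        constructor <;> rintro rfl
        · rw [sig_self_left] at hne; simp at hne
        · rw [sig_self_right] at hne; simp at hne
      have hside := sig_pos_of_mem_openTriangle
        (nc P Q W hPS hQS (by rw [hSet]; simp) hPQ (by tauto) (by tauto)) hvtri
      obtain ⟨hvP, hvQ⟩ := hsigW (ne_of_gt hside)
      have hvW : v ≠ W := by
        rintro rfl
        exact not_mem_openTriangle_apex
          (nc P v Q hPS (by rw [hSet]; simp) hQS (by tauto) hPQ (by tauto)) hvtri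
      -- v is one of the four points, hence v = W'
      have hvS' := hvS
      rw [hSet] at hvS'
      have hvW' : v = W' := by
        rcases hvS' with rfl | rfl | rfl | rfl <;> tauto
      subst hvW'
      -- but W' is strictly on the other side
      nlinarith [hside, hopp, sq_nonneg (sig P Q v)]
  have hRsub : (↑R : Set ℂ) ⊆ S := by rw [hS]; exact Set.subset_union_left
  have hBsub : (↑B : Set ℂ) ⊆ S := by rw [hS]; exact Set.subset_union_right
  have hncardR : ∀ W W' : ℂ, W = Y ∧ W' = Z ∨ W = Z ∧ W' = Y →
      (({W, P, W', Q} : Set ℂ) ∩ ↑R).ncard = 2 ∧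
      (({W, P, W', Q} : Set ℂ) ∩ ↑B).ncard = 2 := by
    rintro W W' hWW'
    have hquad : ({W, P, W', Q} : Set ℂ) = S := by
      rw [hSet]
      rcases hWW' with ⟨rfl, rfl⟩ | ⟨rfl, rfl⟩ <;> (ext v; simp; tauto)
    constructor
    · rw [hquad, Set.inter_eq_self_of_subset_right hRsub, Set.ncard_coe_finset, hR2]
    · rw [hquad, Set.inter_eq_self_of_subset_right hBsub, Set.ncard_coe_finset, hB2]
  rcases lt_or_gt_of_ne (nc P Q Y hPS hQS hYS hPQ hPY hQY) with hY | hY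
  · -- Y below, Z above
    have hZpos : 0 < sig P Q Z := by nlinarith
    obtain ⟨hn1, hn2⟩ := hncardR Z Y (Or.inr ⟨rfl, rfl⟩)
    exact ⟨P, Q, Z, Y, hPS, hQS, hZS, hYS, hPQ, hZpos, hY,
      hempty Z Y (Or.inr ⟨rfl, rfl⟩), hempty Y Z (Or.inl ⟨rfl, rfl⟩), hn1, hn2⟩
  · -- Y above, Z below
    have hZneg : sig P Q Z < 0 := by nlinarith
    obtain ⟨hn1, hn2⟩ := hncardR Y Z (Or.inl ⟨rfl, rfl⟩)
    exact ⟨P, Q, Y, Z, hPS, hQS, hYS, hZS, hPQ, hY, hZneg,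
      hempty Y Z (Or.inl ⟨rfl, rfl⟩), hempty Z Y (Or.inr ⟨rfl, rfl⟩), hn1, hn2⟩

end BaseCase
section Induction

def ConfigT (R B : Finset ℂ) (p q a b : ℂ) : Prop :=
  p ∈ (↑R ∪ ↑B : Set ℂ) ∧ q ∈ (↑R ∪ ↑B : Set ℂ) ∧
  a ∈ (↑R ∪ ↑B : Set ℂ) ∧ b ∈ (↑R ∪ ↑B : Set ℂ) ∧ p ≠ q ∧
  0 < sig p q a ∧ sig p q b < 0 ∧
  openTriangle p q a ∩ (↑R ∪ ↑B : Set ℂ) = ∅ ∧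
  openTriangle p q b ∩ (↑R ∪ ↑B : Set ℂ) = ∅ ∧
  (({a, p, b, q} : Set ℂ) ∩ ↑R).ncard = 2 ∧
  (({a, p, b, q} : Set ℂ) ∩ ↑B).ncard = 2

lemma genPos_mono {S S' : Set ℂ} (h : S' ⊆ S) (hgp : GenPos S) : GenPos S' :=
  fun p hp q hq r hr h1 h2 h3 => hgp p (h hp) q (h hq) r (h hr) h1 h2 h3

lemma affdep3 {a b c : ℂ} (h : ¬ Collinear ℝ ({a, b, c} : Set ℂ)) {m1 m2 m3 : ℝ}
    (heq : m1 • a + m2 • b + m3 • c = 0) (hsum : m1 + m2 + m3 = 0) :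
    m1 = 0 ∧ m2 = 0 ∧ m3 = 0 := by
  have hab : a ≠ b := ne₁₂_of_not_collinear h
  have hcr : cross2 (b - a) (c - a) ≠ 0 := fun h0 => h (collinear_of_sig_eq_zero hab h0)
  have hm1 : m1 = -m2 - m3 := by linarith
  have hkey : m2 • (b - a) + m3 • (c - a) = 0 := by
    have h2 : m2 • (b - a) + m3 • (c - a) = m1 • a + m2 • b + m3 • c := by
      rw [hm1, smul_sub, smul_sub, sub_smul, neg_smul]
      abel
    rw [h2, heq]
  obtain ⟨h2, h3⟩ := pair_zero_of_cross2 hcr hkey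
  exact ⟨by linarith, h2, h3⟩

lemma exists_coeffs (w x y z : ℂ) :
    ∃ l0 l1 l2 l3 : ℝ, l0 • w + l1 • x + l2 • y + l3 • z = 0 ∧ l0 + l1 + l2 + l3 = 0 ∧
      ¬(l1 = 0 ∧ l2 = 0 ∧ l3 = 0) := by
  have hnli : ¬ LinearIndependent ℝ ![x - w, y - w, z - w] := by
    intro h
    have := h.fintype_card_le_finrank
    simp [Complex.finrank_real_complex] at this
  rw [Fintype.not_linearIndependent_iff] at hnli
  obtain ⟨g, hg, i, hi⟩ := hnli
  refine ⟨-(g 0 + g 1 + g 2), g 0, g 1, g 2, ?_, by ring, ?_⟩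
  · rw [Fin.sum_univ_three] at hg
    simp only [Matrix.cons_val_zero, Matrix.cons_val_one, Matrix.head_cons,
      Matrix.cons_val_two, Matrix.tail_cons] at hg
    rw [smul_sub, smul_sub, smul_sub] at hg
    rw [neg_smul, add_smul, add_smul]
    calc -(g 0 • w + g 1 • w + g 2 • w) + g 0 • x + g 1 • y + g 2 • z
        = g 0 • x - g 0 • w + (g 1 • y - g 1 • w) + (g 2 • z - g 2 • w) := by abel
      _ = 0 := hg
  · rintro ⟨h1, h2, h3⟩
    fin_cases i <;> simp_all

set_option maxHeartbeats 2000000 in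
lemma exists_config_four {R B : Finset ℂ} (hd : Disjoint R B)
    (hgp : GenPos (↑R ∪ ↑B : Set ℂ)) (hR : R.card = 2) (hB : B.card = 2) :
    ∃ p q a b : ℂ, ConfigT R B p q a b := by
  obtain ⟨r1, r2, hr12, hRe⟩ := Finset.card_eq_two.mp hR
  obtain ⟨b1, b2, hb12, hBe⟩ := Finset.card_eq_two.mp hB
  have hr1R : r1 ∈ R := by rw [hRe]; simp
  have hr2R : r2 ∈ R := by rw [hRe]; simp
  have hb1B : b1 ∈ B := by rw [hBe]; simp
  have hb2B : b2 ∈ B := by rw [hBe]; simp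
  have hcross : ∀ r ∈ R, ∀ b ∈ B, r ≠ b := by
    intro r hr b hb h
    subst h
    exact Finset.disjoint_left.mp hd hr hb
  have h11 : r1 ≠ b1 := hcross r1 hr1R b1 hb1B
  have h12 : r1 ≠ b2 := hcross r1 hr1R b2 hb2B
  have h21 : r2 ≠ b1 := hcross r2 hr2R b1 hb1B
  have h22 : r2 ≠ b2 := hcross r2 hr2R b2 hb2B
  set S : Set ℂ := (↑R ∪ ↑B : Set ℂ) with hS
  have hSet : S = ({r1, r2, b1, b2} : Set ℂ) := by
    rw [hS, hRe, hBe]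
    ext v
    simp [Finset.coe_insert]
    tauto
  have hmem : ∀ v ∈ ({r1, r2, b1, b2} : Set ℂ), v ∈ S := by rw [hSet]; exact fun v hv => hv
  have nc3 : ∀ x y z : ℂ, x ∈ S → y ∈ S → z ∈ S → x ≠ y → x ≠ z → y ≠ z →
      ¬ Collinear ℝ ({x, y, z} : Set ℂ) := fun x y z hx hy hz e1 e2 e3 =>
    hgp x hx y hy z hz e1 e2 e3
  have hsig : ∀ x y z : ℂ, x ∈ S → y ∈ S → z ∈ S → x ≠ y → x ≠ z → y ≠ z →
      sig x y z ≠ 0 := fun x y z hx hy hz e1 e2 e3 h0 =>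
    nc3 x y z hx hy hz e1 e2 e3 (collinear_of_sig_eq_zero e1 h0)
  have hr1S : r1 ∈ S := hmem r1 (by simp)
  have hr2S : r2 ∈ S := hmem r2 (by simp)
  have hb1S : b1 ∈ S := hmem b1 (by simp)
  have hb2S : b2 ∈ S := hmem b2 (by simp)
  obtain ⟨l0, l1, l2, l3, heq, hsum, hnz⟩ := exists_coeffs r1 r2 b1 b2
  -- all coefficients are nonzero
  have hl0 : l0 ≠ 0 := by
    intro h0
    rw [h0, zero_smul, zero_add] at heq
    obtain ⟨e1, e2, e3⟩ := affdep3 (nc3 r2 b1 b2 hr2S hb1S hb2S h21 h22 hb12) heq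
      (by linarith)
    exact hnz ⟨e1, e2, e3⟩
  have hl1 : l1 ≠ 0 := by
    intro h0
    rw [h0] at heq hsum
    have heq' : l0 • r1 + l2 • b1 + l3 • b2 = 0 := by
      rw [← heq]; rw [zero_smul]; abel
    obtain ⟨e1, e2, e3⟩ := affdep3 (nc3 r1 b1 b2 hr1S hb1S hb2S h11 h12 hb12) heq'
      (by linarith)
    exact hnz ⟨h0, e2, e3⟩
  have hl2 : l2 ≠ 0 := by
    intro h0
    rw [h0] at heq hsum
    have heq' : l0 • r1 + l1 • r2 + l3 • b2 = 0 := by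
      rw [← heq]; rw [zero_smul]; abel
    obtain ⟨e1, e2, e3⟩ := affdep3 (nc3 r1 r2 b2 hr1S hr2S hb2S hr12 h12 h22) heq'
      (by linarith)
    exact hnz ⟨e2, h0, e3⟩
  have hl3 : l3 ≠ 0 := by
    intro h0
    rw [h0] at heq hsum
    have heq' : l0 • r1 + l1 • r2 + l2 • b1 = 0 := by
      rw [← heq]; rw [zero_smul]; abel
    obtain ⟨e1, e2, e3⟩ := affdep3 (nc3 r1 r2 b1 hr1S hr2S hb1S hr12 h11 h21) heq'
      (by linarith)
    exact hnz ⟨e2, e3, h0⟩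
  -- pigeonhole on signs
  have hSet' : ∀ (P Q Y Z : ℂ), ({P, Q, Y, Z} : Set ℂ) = ({r1, r2, b1, b2} : Set ℂ) →
      S = ({P, Q, Y, Z} : Set ℂ) := fun P Q Y Z h => by rw [hSet, h]
  rcases lt_or_gt_of_ne (mul_ne_zero hl0 hl1) with h01 | h01
  · rcases lt_or_gt_of_ne (mul_ne_zero hl0 hl2) with h02 | h02
    · -- l1 and l2 have the same sign : base (r1, b2), companions (r2, b1)
      have h12' : 0 < l1 * l2 := by
        nlinarith [pow_two_pos_of_ne_zero hl0, mul_pos_of_neg_of_neg h01 h02]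
      have hrel := sig_rel4 (P := r1) (Q := b2) heq hsum
      rw [sig_self_left r1 b2, sig_self_right r1 b2] at hrel
      have hkey : l1 * sig r1 b2 r2 + l2 * sig r1 b2 b1 = 0 := by linarith
      have hopp := same_sign_opp hkey h12'
        (hsig r1 b2 r2 hr1S hb2S hr2S h12 hr12 (Ne.symm h22))
        (hsig r1 b2 b1 hr1S hb2S hb1S h12 h11 (Ne.symm hb12))
      obtain ⟨p, q, a, b, hc⟩ := config_of_pair hgp h12 hr12 h11 (Ne.symm h22)
        (Ne.symm hb12) h21
        (hSet' r1 b2 r2 b1 (by ext v; simp; tauto)) hR hB hopp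
      exact ⟨p, q, a, b, hc⟩
    · -- l0 and l2 have the same sign : base (r2, b2), companions (r1, b1)
      have hrel := sig_rel4 (P := r2) (Q := b2) heq hsum
      rw [sig_self_left r2 b2, sig_self_right r2 b2] at hrel
      have hkey : l0 * sig r2 b2 r1 + l2 * sig r2 b2 b1 = 0 := by linarith
      have hopp := same_sign_opp hkey h02
        (hsig r2 b2 r1 hr2S hb2S hr1S h22 (Ne.symm hr12) (Ne.symm h12))
        (hsig r2 b2 b1 hr2S hb2S hb1S h22 h21 (Ne.symm hb12))
      obtain ⟨p, q, a, b, hc⟩ := config_of_pair hgp h22 (Ne.symm hr12) h21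
        (Ne.symm h12) (Ne.symm hb12) h11
        (hSet' r2 b2 r1 b1 (by ext v; simp; tauto)) hR hB hopp
      exact ⟨p, q, a, b, hc⟩
  · -- l0 and l1 have the same sign : base (b1, b2), companions (r1, r2)
    have hrel := sig_rel4 (P := b1) (Q := b2) heq hsum
    rw [sig_self_left b1 b2, sig_self_right b1 b2] at hrel
    have hkey : l0 * sig b1 b2 r1 + l1 * sig b1 b2 r2 = 0 := by linarith
    have hopp := same_sign_opp hkey h01
      (hsig b1 b2 r1 hb1S hb2S hr1S hb12 (Ne.symm h11) (Ne.symm h12))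
      (hsig b1 b2 r2 hb1S hb2S hr2S hb12 (Ne.symm h21) (Ne.symm h22))
    obtain ⟨p, q, a, b, hc⟩ := config_of_pair hgp hb12 (Ne.symm h11) (Ne.symm h21)
      (Ne.symm h12) (Ne.symm h22) hr12
      (hSet' b1 b2 r1 r2 (by ext v; simp; tauto)) hR hB hopp
    exact ⟨p, q, a, b, hc⟩

end Induction
section Main

lemma config_lift_R {R B : Finset ℂ} {x : ℂ} {p q a b : ℂ} (hxB : x ∉ B)
    (hvert : x ∉ convexHull ℝ (((↑R ∪ ↑B) : Set ℂ) \ {x}))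
    (hc : ConfigT (R.erase x) B p q a b) : ConfigT R B p q a b := by
  obtain ⟨hp, hq, ha, hb, hpq, hsa, hsb, hea, heb, hcR, hcB⟩ := hc
  have hS' : (↑(R.erase x) ∪ ↑B : Set ℂ) = ((↑R ∪ ↑B) : Set ℂ) \ {x} := by
    rw [Finset.coe_erase]
    ext v
    simp only [Set.mem_union, Set.mem_diff, Set.mem_singleton_iff, Finset.mem_coe]
    constructor
    · rintro (⟨hv, hne⟩ | hv)
      · exact ⟨Or.inl hv, hne⟩
      · exact ⟨Or.inr hv, fun h => hxB (h ▸ hv)⟩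
    · rintro ⟨hv | hv, hne⟩
      · exact Or.inl ⟨hv, hne⟩
      · exact Or.inr hv
  have hsub : (↑(R.erase x) ∪ ↑B : Set ℂ) ⊆ ((↑R ∪ ↑B) : Set ℂ) := by
    rw [hS']; exact Set.diff_subset
  have hquadS' : ({a, p, b, q} : Set ℂ) ⊆ (↑(R.erase x) ∪ ↑B : Set ℂ) := by
    rintro v (rfl | rfl | rfl | rfl) <;> assumption
  have hquadx : x ∉ ({a, p, b, q} : Set ℂ) := fun hx => by
    have := hquadS' hx
    rw [hS'] at this
    exact this.2 rfl
  have hempty : ∀ w : ℂ, openTriangle p q w ∩ (↑(R.erase x) ∪ ↑B : Set ℂ) = ∅ →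
      w ∈ (↑(R.erase x) ∪ ↑B : Set ℂ) →
      openTriangle p q w ∩ ((↑R ∪ ↑B) : Set ℂ) = ∅ := by
    intro w hw hwS
    rw [Set.eq_empty_iff_forall_notMem]
    rintro v ⟨hvt, hvS⟩
    by_cases hvx : v = x
    · subst hvx
      apply hvert
      have htri : openTriangle p q w ⊆ convexHull ℝ (((↑R ∪ ↑B) : Set ℂ) \ {v}) := by
        refine le_trans interior_subset (convexHull_mono ?_)
        rintro z (rfl | rfl | rfl)
        · rw [← hS']; exact hp
        · rw [← hS']; exact hq
        · rw [← hS']; exact hwS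
      exact htri hvt
    · have : v ∈ (↑(R.erase x) ∪ ↑B : Set ℂ) := by
        rw [hS']; exact ⟨hvS, hvx⟩
      exact Set.eq_empty_iff_forall_notMem.mp hw v ⟨hvt, this⟩
  have hquadR : ({a, p, b, q} : Set ℂ) ∩ ↑R = ({a, p, b, q} : Set ℂ) ∩ ↑(R.erase x) := by
    ext v
    simp only [Set.mem_inter_iff, Finset.coe_erase, Set.mem_diff, Set.mem_singleton_iff,
      Finset.mem_coe]
    constructor
    · rintro ⟨hv, hvR⟩
      exact ⟨hv, hvR, fun h => hquadx (h ▸ hv)⟩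
    · rintro ⟨hv, hvR, _⟩
      exact ⟨hv, hvR⟩
  exact ⟨hsub hp, hsub hq, hsub ha, hsub hb, hpq, hsa, hsb,
    hempty a hea ha, hempty b heb hb, by rw [hquadR]; exact hcR, hcB⟩

lemma config_lift_B {R B : Finset ℂ} {x : ℂ} {p q a b : ℂ} (hxR : x ∉ R)
    (hvert : x ∉ convexHull ℝ (((↑R ∪ ↑B) : Set ℂ) \ {x}))
    (hc : ConfigT R (B.erase x) p q a b) : ConfigT R B p q a b := by
  obtain ⟨hp, hq, ha, hb, hpq, hsa, hsb, hea, heb, hcR, hcB⟩ := hc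
  have hS' : (↑R ∪ ↑(B.erase x) : Set ℂ) = ((↑R ∪ ↑B) : Set ℂ) \ {x} := by
    rw [Finset.coe_erase]
    ext v
    simp only [Set.mem_union, Set.mem_diff, Set.mem_singleton_iff, Finset.mem_coe]
    constructor
    · rintro (hv | ⟨hv, hne⟩)
      · exact ⟨Or.inl hv, fun h => hxR (h ▸ hv)⟩
      · exact ⟨Or.inr hv, hne⟩
    · rintro ⟨hv | hv, hne⟩
      · exact Or.inl hv
      · exact Or.inr ⟨hv, hne⟩
  have hsub : (↑R ∪ ↑(B.erase x) : Set ℂ) ⊆ ((↑R ∪ ↑B) : Set ℂ) := by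
    rw [hS']; exact Set.diff_subset
  have hquadS' : ({a, p, b, q} : Set ℂ) ⊆ (↑R ∪ ↑(B.erase x) : Set ℂ) := by
    rintro v (rfl | rfl | rfl | rfl) <;> assumption
  have hquadx : x ∉ ({a, p, b, q} : Set ℂ) := fun hx => by
    have := hquadS' hx
    rw [hS'] at this
    exact this.2 rfl
  have hempty : ∀ w : ℂ, openTriangle p q w ∩ (↑R ∪ ↑(B.erase x) : Set ℂ) = ∅ →
      w ∈ (↑R ∪ ↑(B.erase x) : Set ℂ) →
      openTriangle p q w ∩ ((↑R ∪ ↑B) : Set ℂ) = ∅ := by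
    intro w hw hwS
    rw [Set.eq_empty_iff_forall_notMem]
    rintro v ⟨hvt, hvS⟩
    by_cases hvx : v = x
    · subst hvx
      apply hvert
      have htri : openTriangle p q w ⊆ convexHull ℝ (((↑R ∪ ↑B) : Set ℂ) \ {v}) := by
        refine le_trans interior_subset (convexHull_mono ?_)
        rintro z (rfl | rfl | rfl)
        · rw [← hS']; exact hp
        · rw [← hS']; exact hq
        · rw [← hS']; exact hwS
      exact htri hvt
    · have : v ∈ (↑R ∪ ↑(B.erase x) : Set ℂ) := by
        rw [hS']; exact ⟨hvS, hvx⟩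
      exact Set.eq_empty_iff_forall_notMem.mp hw v ⟨hvt, this⟩
  have hquadB : ({a, p, b, q} : Set ℂ) ∩ ↑B = ({a, p, b, q} : Set ℂ) ∩ ↑(B.erase x) := by
    ext v
    simp only [Set.mem_inter_iff, Finset.coe_erase, Set.mem_diff, Set.mem_singleton_iff,
      Finset.mem_coe]
    constructor
    · rintro ⟨hv, hvB⟩
      exact ⟨hv, hvB, fun h => hquadx (h ▸ hv)⟩
    · rintro ⟨hv, hvB, _⟩
      exact ⟨hv, hvB⟩
  exact ⟨hsub hp, hsub hq, hsub ha, hsub hb, hpq, hsa, hsb,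
    hempty a hea ha, hempty b heb hb, hcR, by rw [hquadB]; exact hcB⟩

lemma exists_config : ∀ (N : ℕ) (R B : Finset ℂ), R.card + B.card ≤ N → Disjoint R B →
    GenPos (↑R ∪ ↑B : Set ℂ) → 2 ≤ R.card → 2 ≤ B.card →
    ∃ p q a b : ℂ, ConfigT R B p q a b := by
  intro N
  induction N with
  | zero => intro R B hle _ _ hR hB; omega
  | succ N ih =>
    intro R B hle hd hgp hR hB
    by_cases hsmall : R.card + B.card ≤ N
    · exact ih R B hsmall hd hgp hR hB
    by_cases h4 : R.card = 2 ∧ B.card = 2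
    · exact exists_config_four hd hgp h4.1 h4.2
    have hbig : 3 ≤ R.card ∨ 3 ≤ B.card := by omega
    set U : Finset ℂ := R ∪ B with hU
    have hUcoe : (↑U : Set ℂ) = (↑R ∪ ↑B : Set ℂ) := by
      rw [hU, Finset.coe_union]
    have hUcard : 3 ≤ U.card := by
      rw [hU, Finset.card_union_of_disjoint hd]; omega
    obtain ⟨x1, x2, x3, hx1U, hx2U, hx3U, h12, h13, h23, hv1, hv2, hv3⟩ :=
      three_vertices U (by rw [hUcoe]; exact hgp) hUcard
    rw [hUcoe] at hv1 hv2 hv3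
    have hmem3 : ∀ y, y ∈ U → y ∈ R ∨ y ∈ B := by
      intro y hy; rw [hU, Finset.mem_union] at hy; exact hy
    have htriple : ∀ C : Finset ℂ, x1 ∈ C → x2 ∈ C → x3 ∈ C → 3 ≤ C.card := by
      intro C hc1 hc2 hc3
      have hsub : ({x1, x2, x3} : Finset ℂ) ⊆ C := by
        intro v hv
        simp only [Finset.mem_insert, Finset.mem_singleton] at hv
        rcases hv with rfl | rfl | rfl <;> assumption
      have hcard : ({x1, x2, x3} : Finset ℂ).card = 3 := by
        rw [Finset.card_insert_of_notMem (by simp [h12, h13]),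
          Finset.card_insert_of_notMem (by simp [h23]), Finset.card_singleton]
      have := Finset.card_le_card hsub
      omega
    have hpick : ∃ x, x ∉ convexHull ℝ (((↑R ∪ ↑B) : Set ℂ) \ {x}) ∧
        ((x ∈ R ∧ 3 ≤ R.card) ∨ (x ∈ B ∧ 3 ≤ B.card)) := by
      rcases hbig with hRb | hBb
      · by_cases e1 : x1 ∈ R
        · exact ⟨x1, hv1, Or.inl ⟨e1, hRb⟩⟩
        by_cases e2 : x2 ∈ R
        · exact ⟨x2, hv2, Or.inl ⟨e2, hRb⟩⟩
        by_cases e3 : x3 ∈ R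
        · exact ⟨x3, hv3, Or.inl ⟨e3, hRb⟩⟩
        · have b1 := (hmem3 x1 hx1U).resolve_left e1
          have b2 := (hmem3 x2 hx2U).resolve_left e2
          have b3 := (hmem3 x3 hx3U).resolve_left e3
          exact ⟨x1, hv1, Or.inr ⟨b1, htriple B b1 b2 b3⟩⟩
      · by_cases e1 : x1 ∈ B
        · exact ⟨x1, hv1, Or.inr ⟨e1, hBb⟩⟩
        by_cases e2 : x2 ∈ B
        · exact ⟨x2, hv2, Or.inr ⟨e2, hBb⟩⟩
        by_cases e3 : x3 ∈ B
        · exact ⟨x3, hv3, Or.inr ⟨e3, hBb⟩⟩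
        · have r1 := (hmem3 x1 hx1U).resolve_right e1
          have r2 := (hmem3 x2 hx2U).resolve_right e2
          have r3 := (hmem3 x3 hx3U).resolve_right e3
          exact ⟨x1, hv1, Or.inl ⟨r1, htriple R r1 r2 r3⟩⟩
    obtain ⟨x, hvert, hcase⟩ := hpick
    rcases hcase with ⟨hxR, hR3⟩ | ⟨hxB, hB3⟩
    · have hxB : x ∉ B := Finset.disjoint_left.mp hd hxR
      have hcard' : (R.erase x).card + B.card ≤ N := by
        rw [Finset.card_erase_of_mem hxR]; omega
      have hd' : Disjoint (R.erase x) B :=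
        Finset.disjoint_of_subset_left (Finset.erase_subset x R) hd
      have hgp' : GenPos (↑(R.erase x) ∪ ↑B : Set ℂ) := by
        apply genPos_mono _ hgp
        apply Set.union_subset_union_left
        rw [Finset.coe_erase]
        exact Set.diff_subset
      have hR' : 2 ≤ (R.erase x).card := by
        rw [Finset.card_erase_of_mem hxR]; omega
      obtain ⟨p, q, a, b, hc⟩ := ih (R.erase x) B hcard' hd' hgp' hR' hB
      exact ⟨p, q, a, b, config_lift_R hxB hvert hc⟩
    · have hxR : x ∉ R := Finset.disjoint_right.mp hd hxB
      have hcard' : R.card + (B.erase x).card ≤ N := by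
        rw [Finset.card_erase_of_mem hxB]; omega
      have hd' : Disjoint R (B.erase x) :=
        Finset.disjoint_of_subset_right (Finset.erase_subset x B) hd
      have hgp' : GenPos (↑R ∪ ↑(B.erase x) : Set ℂ) := by
        apply genPos_mono _ hgp
        apply Set.union_subset_union_right
        rw [Finset.coe_erase]
        exact Set.diff_subset
      have hB' : 2 ≤ (B.erase x).card := by
        rw [Finset.card_erase_of_mem hxB]; omega
      obtain ⟨p, q, a, b, hc⟩ := ih R (B.erase x) hcard' hd' hgp' hR hB'
      exact ⟨p, q, a, b, config_lift_B hxR hvert hc⟩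

end Main


/-- Every finite bicolored point set `S = R ∪ B` in general
position with `|R| ≥ 2` and `|B| ≥ 2` contains at least one balanced 4-hole. -/
theorem stmt0 (R B : Finset ℂ) (hdisj : Disjoint R B)
    (hgp : GenPos (↑R ∪ ↑B : Set ℂ)) (hR : 2 ≤ R.card) (hB : 2 ≤ B.card) :
    ∃ a b c d : ℂ, IsBalanced4Hole R B a b c d := by
  obtain ⟨p, q, a, b, hc⟩ :=
    exists_config (R.card + B.card) R B le_rfl hdisj hgp hR hB
  obtain ⟨hp, hq, ha, hb, hpq, hsa, hsb, hea, heb, hcR, hcB⟩ := hc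
  exact ⟨a, p, b, q, master_lemma hgp hp hq ha hb hpq hsa hsb hea heb hcR hcB⟩
end
end

section
/- Let S = R ∪ B be a finite bicolored point set in general position in the plane. If there exist two red points a, b ∈ R and two blue points c, d ∈ B such that the segments ab and cd intersect, then S contains a balanced convex 4-hole. -/
noncomputable section

section Stmt7Helpers

open Set

/-- signed "side of line c d" functional -/
noncomputable def tfun (c d z : ℂ) : ℝ := ((z - c) / (d - c)).im

lemma isLinearMap_imdiv (e : ℂ) : IsLinearMap ℝ (fun z : ℂ => (z / e).im) := by
  constructor
  · intro x y; simp [add_div]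
  · intro r x
    rw [Complex.real_smul, mul_div_assoc]
    simp [Complex.smul_im]

lemma tfun_eq (c d z : ℂ) : tfun c d z = (z / (d - c)).im - (c / (d - c)).im := by
  simp [tfun, sub_div]

lemma tfun_combo (c d x y : ℂ) (s t : ℝ) (h : s + t = 1) :
    tfun c d (s • x + t • y) = s * tfun c d x + t * tfun c d y := by
  have hL := isLinearMap_imdiv (d - c)
  simp only [tfun_eq]
  rw [hL.map_add, hL.map_smul, hL.map_smul]
  simp only [smul_eq_mul]
  linear_combination (c / (d - c)).im * h

lemma tfun_self_left (c d : ℂ) : tfun c d c = 0 := by simp [tfun]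

lemma tfun_self_right (c d : ℂ) (h : c ≠ d) : tfun c d d = 0 := by
  have : d - c ≠ 0 := sub_ne_zero.mpr (Ne.symm h)
  simp [tfun, div_self this]

lemma tfun_eq_zero_iff_collinear {c d : ℂ} (h : c ≠ d) (y : ℂ) :
    tfun c d y = 0 ↔ Collinear ℝ ({c, d, y} : Set ℂ) := by
  have hdc : d - c ≠ 0 := sub_ne_zero.mpr (Ne.symm h)
  rw [collinear_iff_of_mem (Set.mem_insert c {d, y})]
  constructor
  · intro h0
    refine ⟨d - c, ?_⟩
    intro p hp
    rcases hp with rfl | rfl | rfl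
    · exact ⟨0, by simp⟩
    · exact ⟨1, by simp⟩
    · refine ⟨((p - c) / (d - c)).re, ?_⟩
      have hw : ((p - c) / (d - c)) = (((p - c) / (d - c)).re : ℂ) := by
        apply Complex.ext <;> simp [h0, tfun] at *
        exact h0
      have : p - c = (((p - c) / (d - c)).re : ℂ) * (d - c) := by
        rw [← hw, div_mul_cancel₀ _ hdc]
      rw [vadd_eq_add, Complex.real_smul, ← this]; ring
  · rintro ⟨v, hv⟩
    obtain ⟨r1, hr1⟩ := hv d (by simp)
    obtain ⟨r2, hr2⟩ := hv y (by simp)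
    rw [vadd_eq_add, Complex.real_smul] at hr1 hr2
    have hr1' : d - c = (r1 : ℂ) * v := by rw [hr1]; ring
    have hr2' : y - c = (r2 : ℂ) * v := by rw [hr2]; ring
    have hr1ne : (r1 : ℂ) ≠ 0 := by
      intro h0; rw [h0, zero_mul] at hr1'; exact hdc hr1'
    have : (y - c) / (d - c) = ((r2 / r1 : ℝ) : ℂ) := by
      rw [hr1', hr2', Complex.ofReal_div]
      have hv0 : v ≠ 0 := by
        intro h0; rw [h0, mul_zero] at hr1'; exact hdc hr1'
      field_simp
    simp [tfun, this]

lemma tfun_zero_param {c d : ℂ} (h : c ≠ d) {y : ℂ} (h0 : tfun c d y = 0) :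
    y = c + (((y - c) / (d - c)).re : ℝ) • (d - c) := by
  have hdc : d - c ≠ 0 := sub_ne_zero.mpr (Ne.symm h)
  have hw : ((y - c) / (d - c)) = (((y - c) / (d - c)).re : ℂ) := by
    apply Complex.ext
    · simp
    · simpa [tfun] using h0
  have : y - c = (((y - c) / (d - c)).re : ℂ) * (d - c) := by
    rw [← hw, div_mul_cancel₀ _ hdc]
  rw [Complex.real_smul, ← this]; ring

lemma convex_tfun_le (c d : ℂ) (M : ℝ) : Convex ℝ {z : ℂ | tfun c d z ≤ M} := by
  have : {z : ℂ | tfun c d z ≤ M} = {z : ℂ | (z / (d - c)).im ≤ M + (c / (d - c)).im} := by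
    ext z; rw [Set.mem_setOf_eq, Set.mem_setOf_eq, tfun_eq, sub_le_iff_le_add]
  rw [this]
  exact convex_halfSpace_le (isLinearMap_imdiv (d - c)) _

lemma convex_tfun_ge (c d : ℂ) (M : ℝ) : Convex ℝ {z : ℂ | M ≤ tfun c d z} := by
  have : {z : ℂ | M ≤ tfun c d z} = {z : ℂ | M + (c / (d - c)).im ≤ (z / (d - c)).im} := by
    ext z; rw [Set.mem_setOf_eq, Set.mem_setOf_eq, tfun_eq, le_sub_iff_add_le]
  rw [this]
  exact convex_halfSpace_ge (isLinearMap_imdiv (d - c)) _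

/-- on a convex hull, tfun is bounded by its sup over generators -/
lemma tfun_hull_le {c d : ℂ} {s : Set ℂ} {M : ℝ} (h : ∀ z ∈ s, tfun c d z ≤ M) :
    ∀ y ∈ convexHull ℝ s, tfun c d y ≤ M :=
  fun _ hy => convexHull_min h (convex_tfun_le c d M) hy

lemma tfun_hull_ge {c d : ℂ} {s : Set ℂ} {M : ℝ} (h : ∀ z ∈ s, M ≤ tfun c d z) :
    ∀ y ∈ convexHull ℝ s, M ≤ tfun c d y :=
  fun _ hy => convexHull_min h (convex_tfun_ge c d M) hy

/-- crossing segments give opposite signs -/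
lemma cross_signs {a b c d : ℂ} (hcd : c ≠ d)
    (hna : ¬ Collinear ℝ ({c, d, a} : Set ℂ)) (hnb : ¬ Collinear ℝ ({c, d, b} : Set ℂ))
    (hcross : (segment ℝ a b ∩ segment ℝ c d).Nonempty) :
    tfun c d a * tfun c d b < 0 := by
  obtain ⟨p, hp1, hp2⟩ := hcross
  obtain ⟨s, t, hs, ht, hst, hp⟩ := hp1
  obtain ⟨u, v, hu, hv, huv, hq⟩ := hp2
  have hpt : tfun c d p = 0 := by
    rw [← hq, tfun_combo c d c d u v huv, tfun_self_left, tfun_self_right c d hcd]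
    ring
  have hps : s * tfun c d a + t * tfun c d b = 0 := by
    rw [← tfun_combo c d a b s t hst, hp, hpt]
  have ha0 : tfun c d a ≠ 0 := fun h => hna ((tfun_eq_zero_iff_collinear hcd a).mp h)
  have hb0 : tfun c d b ≠ 0 := fun h => hnb ((tfun_eq_zero_iff_collinear hcd b).mp h)
  rcases ha0.lt_or_gt with hA | hA <;> rcases hb0.lt_or_gt with hB | hB
  · have h1 := mul_nonpos_of_nonneg_of_nonpos hs hA.le
    have h2 := mul_nonpos_of_nonneg_of_nonpos ht hB.le
    have hs0 : s * tfun c d a = 0 := by linarith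
    rcases mul_eq_zero.mp hs0 with h | h
    · exfalso; rw [h, zero_mul, zero_add] at hps; rw [h, zero_add] at hst
      rw [hst, one_mul] at hps; exact hb0 hps
    · exact absurd h ha0
  · nlinarith
  · nlinarith
  · have h1 := mul_nonneg hs hA.le
    have h2 := mul_nonneg ht hB.le
    have hs0 : s * tfun c d a = 0 := by linarith
    rcases mul_eq_zero.mp hs0 with h | h
    · exfalso; rw [h, zero_mul, zero_add] at hps; rw [h, zero_add] at hst
      rw [hst, one_mul] at hps; exact hb0 hps
    · exact absurd h ha0

/-- crossing implies first diagonal endpoint not in hull of the other three -/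
lemma not_mem_hull_of_sign {a b c d : ℂ} (hcd : c ≠ d)
    (hsign : tfun c d a * tfun c d b < 0) :
    a ∉ convexHull ℝ ({b, c, d} : Set ℂ) := by
  intro hmem
  rcases lt_or_gt_of_ne (fun h : tfun c d b = 0 => by rw [h, mul_zero] at hsign; exact lt_irrefl _ hsign) with hB | hB
  · -- tfun b < 0, so on hull tfun ≤ 0, so tfun a ≤ 0, but sign says tfun a > 0
    have hle : ∀ z ∈ ({b, c, d} : Set ℂ), tfun c d z ≤ 0 := by
      rintro z (h | h | h) <;> rw [h]
      · exact le_of_lt hB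
      · exact le_of_eq (tfun_self_left c d)
      · exact le_of_eq (tfun_self_right c d hcd)
    have := tfun_hull_le hle a hmem
    nlinarith
  · have hge : ∀ z ∈ ({b, c, d} : Set ℂ), (0:ℝ) ≤ tfun c d z := by
      rintro z (h | h | h) <;> rw [h]
      · exact le_of_lt hB
      · exact le_of_eq (tfun_self_left c d).symm
      · exact le_of_eq (tfun_self_right c d hcd).symm
    have := tfun_hull_ge hge a hmem
    nlinarith

/-- separation of a point from the hull of a finite set -/
lemma sep_point {v : ℂ} {s : Set ℂ} (hs : s.Finite) (hv : v ∉ convexHull ℝ s) :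
    ∃ f : ℂ →L[ℝ] ℝ, (∀ z ∈ s, f z < f v) ∧
      ∀ z ∈ convexHull ℝ (insert v s), f z ≤ f v := by
  obtain ⟨f, u, hfu, huv⟩ := geometric_hahn_banach_closed_point
    (convex_convexHull ℝ s) (hs.isClosed_convexHull (𝕜 := ℝ)) hv
  refine ⟨f, fun z hz => lt_trans (hfu z (subset_convexHull ℝ s hz)) huv, ?_⟩
  intro z hz
  have hconv : Convex ℝ {w : ℂ | f w ≤ f v} :=
    convex_halfSpace_le (f : ℂ →ₗ[ℝ] ℝ).isLinear _
  refine convexHull_min ?_ hconv hz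
  rintro w (h | h)
  · simp [h]
  · exact le_of_lt (lt_trans (hfu w (subset_convexHull ℝ s h)) huv)

/-- a vertex separated from the rest is not in the interior of the hull -/
lemma not_mem_interior_hull {v : ℂ} {s : Set ℂ} (hs : s.Finite) (hsne : s.Nonempty)
    (hv : v ∉ convexHull ℝ s) :
    v ∉ interior (convexHull ℝ (insert v s)) := by
  obtain ⟨f, hstrict, hbound⟩ := sep_point hs hv
  intro hint
  obtain ⟨z₀, hz₀⟩ := hsne
  set w := v - z₀ with hw
  have hfw : 0 < f w := by
    have := hstrict z₀ hz₀
    simp only [hw, map_sub]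
    linarith
  have hwne : w ≠ 0 := fun h => by rw [h, map_zero] at hfw; exact lt_irrefl _ hfw
  have hwn : 0 < ‖w‖ := norm_pos_iff.mpr hwne
  obtain ⟨ε, hε, hball⟩ := Metric.isOpen_iff.mp isOpen_interior v hint
  set y := v + (ε / (2 * ‖w‖)) • w with hy
  have hpos : 0 < ε / (2 * ‖w‖) := by positivity
  have hyball : y ∈ Metric.ball v ε := by
    rw [Metric.mem_ball, dist_eq_norm, hy]
    have : v + (ε / (2 * ‖w‖)) • w - v = (ε / (2 * ‖w‖)) • w := by ring_nf
    rw [this, norm_smul, Real.norm_eq_abs, abs_of_pos hpos]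
    have heq : ε / (2 * ‖w‖) * ‖w‖ = ε / 2 := by
      rw [div_mul_eq_mul_div, mul_comm (2:ℝ) ‖w‖, ← div_div,
        mul_div_cancel_right₀ _ (ne_of_gt hwn)]
    rw [heq]; linarith
  have hyK : y ∈ convexHull ℝ (insert v s) := interior_subset (hball hyball)
  have := hbound y hyK
  rw [hy, map_add, map_smul] at this
  simp only [smul_eq_mul] at this
  nlinarith

lemma seg_meet {c d x w : ℂ} {K : Set ℂ} (hK : Convex ℝ K) (hx : x ∈ K) (hw : w ∈ K)
    (hcd : c ≠ d) (fc fd : ℂ →L[ℝ] ℝ)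
    (hfc : ∀ z ∈ K, fc z ≤ fc c) (hfcd : fc d < fc c)
    (hfd : ∀ z ∈ K, fd z ≤ fd d) (hfdc : fd c < fd d)
    (hsign : tfun c d x * tfun c d w < 0) :
    (segment ℝ x w ∩ segment ℝ c d).Nonempty := by
  set X := tfun c d x with hXdef
  set W := tfun c d w with hWdef
  have hX0 : X ≠ 0 := fun h => by rw [h, zero_mul] at hsign; exact lt_irrefl _ hsign
  have hW0 : W ≠ 0 := fun h => by rw [h, mul_zero] at hsign; exact lt_irrefl _ hsign
  have hXXW : 0 < X * (X - W) := by nlinarith [mul_self_pos.mpr hX0]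
  have hne : X - W ≠ 0 := by
    intro h; rw [h, mul_zero] at hXXW; exact lt_irrefl _ hXXW
  set u := X / (X - W) with hudef
  have hu0 : 0 < u := by
    rcases mul_pos_iff.mp hXXW with ⟨h1, h2⟩ | ⟨h1, h2⟩
    · exact div_pos h1 h2
    · exact div_pos_of_neg_of_neg h1 h2
  have hWXW : 0 < (-W) * (X - W) := by nlinarith [mul_self_pos.mpr hW0]
  have h1u : 1 - u = (-W) / (X - W) := by
    rw [hudef, eq_div_iff hne, sub_mul, one_mul, div_mul_cancel₀ _ hne]; ring
  have hu1 : u < 1 := by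
    have : 0 < 1 - u := by
      rw [h1u]
      rcases mul_pos_iff.mp hWXW with ⟨h1, h2⟩ | ⟨h1, h2⟩
      · exact div_pos h1 h2
      · exact div_pos_of_neg_of_neg h1 h2
    linarith
  set q := (1 - u) • x + u • w with hqdef
  have hq1 : q ∈ segment ℝ x w := ⟨1 - u, u, by linarith, hu0.le, by ring, rfl⟩
  have hqt : tfun c d q = 0 := by
    rw [hqdef, tfun_combo c d x w (1 - u) u (by ring), ← hXdef, ← hWdef]
    have h2 : u * (X - W) = X := div_mul_cancel₀ _ hne
    nlinarith
  have hqK : q ∈ K := hK hx hw (by linarith) hu0.le (by ring)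
  set r := (((q - c) / (d - c)).re : ℝ) with hrdef
  have hq2 : q = c + r • (d - c) := tfun_zero_param hcd hqt
  have hfcq : fc q = fc c + r * (fc d - fc c) := by
    rw [hq2, map_add, map_smul, map_sub]; simp [smul_eq_mul]
  have hfdq : fd q = fd c + r * (fd d - fd c) := by
    rw [hq2, map_add, map_smul, map_sub]; simp [smul_eq_mul]
  have hr0 : 0 ≤ r := by
    have := hfc q hqK
    rw [hfcq] at this
    nlinarith
  have hr1 : r ≤ 1 := by
    have := hfd q hqK
    rw [hfdq] at this
    nlinarith
  refine ⟨q, hq1, ⟨1 - r, r, by linarith, hr0, by ring, ?_⟩⟩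
  rw [hq2]
  simp only [Complex.real_smul, Complex.ofReal_sub, Complex.ofReal_one]
  ring

lemma tfun_eq_zero_of_mem_segment {c d z : ℂ} (h : z ∈ segment ℝ c d) :
    tfun c d z = 0 := by
  obtain ⟨u, v, _, _, huv, hz⟩ := h
  by_cases hcd : c = d
  · subst hcd
    have : z = c := by
      rw [← hz, ← add_smul, huv, one_smul]
    rw [this, tfun_self_left]
  · rw [← hz, tfun_combo c d c d u v huv, tfun_self_left, tfun_self_right c d hcd]
    ring

lemma quad_distinct {P Q : Finset ℂ} (hdisj : Disjoint P Q)
    (hgp : GenPos (↑P ∪ ↑Q)) {a b c d : ℂ}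
    (ha : a ∈ P) (hb : b ∈ P) (hc : c ∈ Q) (hd : d ∈ Q)
    (hcross : (segment ℝ a b ∩ segment ℝ c d).Nonempty) :
    a ≠ b ∧ c ≠ d ∧ a ≠ c ∧ a ≠ d ∧ b ≠ c ∧ b ≠ d := by
  have hSa : a ∈ (↑P ∪ ↑Q : Set ℂ) := Or.inl ha
  have hSb : b ∈ (↑P ∪ ↑Q : Set ℂ) := Or.inl hb
  have hSc : c ∈ (↑P ∪ ↑Q : Set ℂ) := Or.inr hc
  have hSd : d ∈ (↑P ∪ ↑Q : Set ℂ) := Or.inr hd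
  have hac : a ≠ c := fun h => Finset.disjoint_left.mp hdisj ha (h ▸ hc)
  have had : a ≠ d := fun h => Finset.disjoint_left.mp hdisj ha (h ▸ hd)
  have hbc : b ≠ c := fun h => Finset.disjoint_left.mp hdisj hb (h ▸ hc)
  have hbd : b ≠ d := fun h => Finset.disjoint_left.mp hdisj hb (h ▸ hd)
  obtain ⟨p, hp1, hp2⟩ := hcross
  have hab : a ≠ b := by
    intro h
    rw [← h, segment_same, mem_singleton_iff] at hp1
    by_cases hcd' : c = d
    · rw [hcd', segment_same, mem_singleton_iff] at hp2
      exact had (hp1.symm.trans hp2)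
    · have h0 := tfun_eq_zero_of_mem_segment hp2
      rw [hp1] at h0
      exact hgp c hSc d hSd a hSa hcd' (Ne.symm hac) (Ne.symm had)
        ((tfun_eq_zero_iff_collinear hcd' a).mp h0)
  have hcd : c ≠ d := by
    intro h
    rw [← h, segment_same, mem_singleton_iff] at hp2
    have h0 := tfun_eq_zero_of_mem_segment hp1
    rw [hp2] at h0
    exact hgp a hSa b hSb c hSc hab hac hbc
      ((tfun_eq_zero_iff_collinear hab c).mp h0)
  exact ⟨hab, hcd, hac, had, hbc, hbd⟩

lemma sign_flip {p q r : ℝ} (hpq : p * q < 0) (hr : ¬ (r * p < 0)) (hr0 : r ≠ 0) :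
    r * q < 0 := by
  have hp0 : p ≠ 0 := fun h => by rw [h, zero_mul] at hpq; exact lt_irrefl _ hpq
  have hq0 : q ≠ 0 := fun h => by rw [h, mul_zero] at hpq; exact lt_irrefl _ hpq
  push_neg at hr
  have hrp : 0 < r * p := lt_of_le_of_ne hr (fun h => (mul_ne_zero hr0 hp0) h.symm)
  nlinarith [mul_self_pos.mpr hp0]

/-- Key descent step: given a point x of the same color as a,b strictly inside
the quadrilateral, produce a smaller crossing configuration. -/
lemma descend {P Q : Finset ℂ} (hdisj : Disjoint P Q) (hgp : GenPos (↑P ∪ ↑Q))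
    {a b c d : ℂ} (ha : a ∈ P) (hb : b ∈ P) (hc : c ∈ Q) (hd : d ∈ Q)
    (hcross : (segment ℝ a b ∩ segment ℝ c d).Nonempty)
    {x : ℂ} (hxP : x ∈ P)
    (hxK : x ∈ interior (convexHull ℝ ({a, b, c, d} : Set ℂ))) :
    ∃ w ∈ P, (segment ℝ x w ∩ segment ℝ c d).Nonempty ∧
      convexHull ℝ ({x, w, c, d} : Set ℂ) ⊆ convexHull ℝ ({a, b, c, d} : Set ℂ) ∧
      x ∉ interior (convexHull ℝ ({x, w, c, d} : Set ℂ)) := by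
  obtain ⟨hab, hcd, hac, had, hbc, hbd⟩ := quad_distinct hdisj hgp ha hb hc hd hcross
  have hSa : a ∈ (↑P ∪ ↑Q : Set ℂ) := Or.inl ha
  have hSb : b ∈ (↑P ∪ ↑Q : Set ℂ) := Or.inl hb
  have hSc : c ∈ (↑P ∪ ↑Q : Set ℂ) := Or.inr hc
  have hSd : d ∈ (↑P ∪ ↑Q : Set ℂ) := Or.inr hd
  have hSx : x ∈ (↑P ∪ ↑Q : Set ℂ) := Or.inl hxP
  have hxc : x ≠ c := fun h => Finset.disjoint_left.mp hdisj hxP (h ▸ hc)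
  have hxd : x ≠ d := fun h => Finset.disjoint_left.mp hdisj hxP (h ▸ hd)
  -- signs of a, b w.r.t. line cd
  have hsAB : tfun c d a * tfun c d b < 0 :=
    cross_signs hcd
      (hgp c hSc d hSd a hSa hcd (Ne.symm hac) (Ne.symm had))
      (hgp c hSc d hSd b hSb hcd (Ne.symm hbc) (Ne.symm hbd))
      hcross
  have hcross' : (segment ℝ c d ∩ segment ℝ a b).Nonempty := by
    rwa [Set.inter_comm]
  have hsCD : tfun a b c * tfun a b d < 0 :=
    cross_signs hab
      (hgp a hSa b hSb c hSc hab hac hbc)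
      (hgp a hSa b hSb d hSd hab had hbd)
      hcross'
  -- the four hull exclusions
  have hC : c ∉ convexHull ℝ ({d, a, b} : Set ℂ) := not_mem_hull_of_sign hab hsCD
  have hD : d ∉ convexHull ℝ ({c, a, b} : Set ℂ) :=
    not_mem_hull_of_sign hab (by rw [mul_comm] at hsCD; exact hsCD)
  -- interior exclusions for the four vertices
  have hset_b : ({a, b, c, d} : Set ℂ) = insert b {a, c, d} := by
    ext z; simp only [mem_insert_iff, mem_singleton_iff]; tauto
  have hset_c : ({a, b, c, d} : Set ℂ) = insert c {d, a, b} := by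
    ext z; simp only [mem_insert_iff, mem_singleton_iff]; tauto
  have hset_d : ({a, b, c, d} : Set ℂ) = insert d {c, a, b} := by
    ext z; simp only [mem_insert_iff, mem_singleton_iff]; tauto
  have hA : a ∉ convexHull ℝ ({b, c, d} : Set ℂ) := not_mem_hull_of_sign hcd hsAB
  have hB : b ∉ convexHull ℝ ({a, c, d} : Set ℂ) :=
    not_mem_hull_of_sign hcd (by rw [mul_comm] at hsAB; exact hsAB)
  have haI : a ∉ interior (convexHull ℝ ({a, b, c, d} : Set ℂ)) :=
    not_mem_interior_hull (Set.toFinite _) ⟨b, by simp⟩ hA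
  have hbI : b ∉ interior (convexHull ℝ ({a, b, c, d} : Set ℂ)) := by
    rw [hset_b]
    exact not_mem_interior_hull (Set.toFinite _) ⟨a, by simp⟩ hB
  have hcI : c ∉ interior (convexHull ℝ ({a, b, c, d} : Set ℂ)) := by
    rw [hset_c]
    exact not_mem_interior_hull (Set.toFinite _) ⟨d, by simp⟩ hC
  have hdI : d ∉ interior (convexHull ℝ ({a, b, c, d} : Set ℂ)) := by
    rw [hset_d]
    exact not_mem_interior_hull (Set.toFinite _) ⟨c, by simp⟩ hD
  have hxa : x ≠ a := fun h => haI (h ▸ hxK)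
  have hxb : x ≠ b := fun h => hbI (h ▸ hxK)
  -- x is not on line cd
  have hX0 : tfun c d x ≠ 0 := fun h =>
    hgp c hSc d hSd x hSx hcd (Ne.symm hxc) (Ne.symm hxd)
      ((tfun_eq_zero_iff_collinear hcd x).mp h)
  -- choose the partner w
  obtain ⟨w, hwP, hwmem, hsign⟩ :
      ∃ w, w ∈ P ∧ (w = a ∨ w = b) ∧ tfun c d x * tfun c d w < 0 := by
    by_cases hwa : tfun c d x * tfun c d a < 0
    · exact ⟨a, ha, Or.inl rfl, hwa⟩
    · refine ⟨b, hb, Or.inr rfl, ?_⟩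
      exact sign_flip hsAB hwa hX0
  -- separating functionals for c and d
  obtain ⟨fc, hfc1, hfc2⟩ := sep_point (Set.toFinite ({d, a, b} : Set ℂ)) hC
  obtain ⟨fd, hfd1, hfd2⟩ := sep_point (Set.toFinite ({c, a, b} : Set ℂ)) hD
  rw [← hset_c] at hfc2
  rw [← hset_d] at hfd2
  have hwK : w ∈ convexHull ℝ ({a, b, c, d} : Set ℂ) := by
    rcases hwmem with rfl | rfl
    · exact subset_convexHull ℝ _ (by simp)
    · exact subset_convexHull ℝ _ (by simp)
  have hcross2 : (segment ℝ x w ∩ segment ℝ c d).Nonempty :=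
    seg_meet (convex_convexHull ℝ _) (interior_subset hxK) hwK hcd fc fd
      hfc2 (hfc1 d (by simp)) hfd2 (hfd1 c (by simp)) hsign
  refine ⟨w, hwP, hcross2, ?_, ?_⟩
  · apply convexHull_min ?_ (convex_convexHull ℝ _)
    rintro z (h | h | h | h) <;> rw [h]
    · exact interior_subset hxK
    · exact hwK
    · exact subset_convexHull ℝ _ (by simp)
    · exact subset_convexHull ℝ _ (by simp)
  · have hxW : x ∉ convexHull ℝ ({w, c, d} : Set ℂ) := not_mem_hull_of_sign hcd hsign
    exact not_mem_interior_hull (Set.toFinite _) ⟨w, by simp⟩ hxW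

/-- When the interior is empty of points of `S`, the crossing quadrilateral is a
balanced convex 4-hole. -/
lemma conclude {R B P Q : Finset ℂ} (hdisj : Disjoint P Q) (hgp : GenPos (↑P ∪ ↑Q))
    (hPQ : (P = R ∧ Q = B) ∨ (P = B ∧ Q = R))
    {a b c d : ℂ} (ha : a ∈ P) (hb : b ∈ P) (hc : c ∈ Q) (hd : d ∈ Q)
    (hcross : (segment ℝ a b ∩ segment ℝ c d).Nonempty)
    (hempty : ∀ x ∈ (↑P ∪ ↑Q : Set ℂ),
      x ∉ interior (convexHull ℝ ({a, b, c, d} : Set ℂ))) :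
    IsBalancedConvex4Hole R B a b c d := by
  obtain ⟨hab, hcd, hac, had, hbc, hbd⟩ := quad_distinct hdisj hgp ha hb hc hd hcross
  have hSa : a ∈ (↑P ∪ ↑Q : Set ℂ) := Or.inl ha
  have hSb : b ∈ (↑P ∪ ↑Q : Set ℂ) := Or.inl hb
  have hSc : c ∈ (↑P ∪ ↑Q : Set ℂ) := Or.inr hc
  have hSd : d ∈ (↑P ∪ ↑Q : Set ℂ) := Or.inr hd
  have hsAB : tfun c d a * tfun c d b < 0 :=
    cross_signs hcd
      (hgp c hSc d hSd a hSa hcd (Ne.symm hac) (Ne.symm had))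
      (hgp c hSc d hSd b hSb hcd (Ne.symm hbc) (Ne.symm hbd))
      hcross
  have hsCD : tfun a b c * tfun a b d < 0 :=
    cross_signs hab
      (hgp a hSa b hSb c hSc hab hac hbc)
      (hgp a hSa b hSb d hSd hab had hbd)
      (by rwa [Set.inter_comm])
  have hA : a ∉ convexHull ℝ ({b, c, d} : Set ℂ) := not_mem_hull_of_sign hcd hsAB
  have hB : b ∉ convexHull ℝ ({a, c, d} : Set ℂ) :=
    not_mem_hull_of_sign hcd (by rw [mul_comm] at hsAB; exact hsAB)
  have hC : c ∉ convexHull ℝ ({d, a, b} : Set ℂ) := not_mem_hull_of_sign hab hsCD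
  have hD : d ∉ convexHull ℝ ({c, a, b} : Set ℂ) :=
    not_mem_hull_of_sign hab (by rw [mul_comm] at hsCD; exact hsCD)
  have hSeq : (↑P ∪ ↑Q : Set ℂ) = (↑R ∪ ↑B : Set ℂ) := by
    rcases hPQ with ⟨h1, h2⟩ | ⟨h1, h2⟩ <;> subst h1 <;> subst h2
    · rfl
    · exact Set.union_comm _ _
  refine ⟨?_, ?_, ?_, ?_, ?_, ?_⟩
  · -- pairwise distinct
    simp only [List.pairwise_cons, List.mem_cons, List.mem_singleton,
      List.not_mem_nil, List.Pairwise.nil]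
    refine ⟨?_, ?_, ?_, fun _ h => absurd h (by simp), trivial⟩
    · rintro z (rfl | rfl | rfl | h)
      · exact hab
      · exact hac
      · exact had
      · exact absurd h (by simp)
    · rintro z (rfl | rfl | h)
      · exact hbc
      · exact hbd
      · exact absurd h (by simp)
    · rintro z (rfl | h)
      · exact hcd
      · exact absurd h (by simp)
  · -- convex position
    intro z hz
    rcases hz with rfl | rfl | rfl | rfl
    · exact fun hmem => hA (convexHull_mono (by intro y hy; simp at hy ⊢; tauto) hmem)
    · exact fun hmem => hB (convexHull_mono (by intro y hy; simp at hy ⊢; tauto) hmem)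
    · exact fun hmem => hC (convexHull_mono (by intro y hy; simp at hy ⊢; tauto) hmem)
    · exact fun hmem => hD (convexHull_mono (by intro y hy; simp at hy ⊢; tauto) hmem)
  · -- subset
    rw [← hSeq]
    rintro z (rfl | rfl | rfl | h)
    · exact hSa
    · exact hSb
    · exact hSc
    · rw [mem_singleton_iff] at h; rw [h]; exact hSd
  · -- two red
    have hPset : ({a, b, c, d} : Set ℂ) ∩ ↑P = {a, b} := by
      ext z
      simp only [mem_inter_iff, mem_insert_iff, mem_singleton_iff, Finset.mem_coe]
      constructor
      · rintro ⟨rfl | rfl | rfl | rfl, hzP⟩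
        · exact Or.inl rfl
        · exact Or.inr rfl
        · exact absurd hzP (Finset.disjoint_right.mp hdisj hc)
        · exact absurd hzP (Finset.disjoint_right.mp hdisj hd)
      · rintro (rfl | rfl)
        · exact ⟨Or.inl rfl, ha⟩
        · exact ⟨Or.inr (Or.inl rfl), hb⟩
    have hQset : ({a, b, c, d} : Set ℂ) ∩ ↑Q = {c, d} := by
      ext z
      simp only [mem_inter_iff, mem_insert_iff, mem_singleton_iff, Finset.mem_coe]
      constructor
      · rintro ⟨rfl | rfl | rfl | rfl, hzQ⟩
        · exact absurd hzQ (Finset.disjoint_left.mp hdisj ha)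
        · exact absurd hzQ (Finset.disjoint_left.mp hdisj hb)
        · exact Or.inl rfl
        · exact Or.inr rfl
      · rintro (rfl | rfl)
        · exact ⟨Or.inr (Or.inr (Or.inl rfl)), hc⟩
        · exact ⟨Or.inr (Or.inr (Or.inr rfl)), hd⟩
    rcases hPQ with ⟨h1, h2⟩ | ⟨h1, h2⟩
    · rw [← h1, hPset]; exact Set.ncard_pair hab
    · rw [← h2, hQset]; exact Set.ncard_pair hcd
  · -- two blue
    have hPset : ({a, b, c, d} : Set ℂ) ∩ ↑P = {a, b} := by
      ext z
      simp only [mem_inter_iff, mem_insert_iff, mem_singleton_iff, Finset.mem_coe]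
      constructor
      · rintro ⟨rfl | rfl | rfl | rfl, hzP⟩
        · exact Or.inl rfl
        · exact Or.inr rfl
        · exact absurd hzP (Finset.disjoint_right.mp hdisj hc)
        · exact absurd hzP (Finset.disjoint_right.mp hdisj hd)
      · rintro (rfl | rfl)
        · exact ⟨Or.inl rfl, ha⟩
        · exact ⟨Or.inr (Or.inl rfl), hb⟩
    have hQset : ({a, b, c, d} : Set ℂ) ∩ ↑Q = {c, d} := by
      ext z
      simp only [mem_inter_iff, mem_insert_iff, mem_singleton_iff, Finset.mem_coe]
      constructor
      · rintro ⟨rfl | rfl | rfl | rfl, hzQ⟩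
        · exact absurd hzQ (Finset.disjoint_left.mp hdisj ha)
        · exact absurd hzQ (Finset.disjoint_left.mp hdisj hb)
        · exact Or.inl rfl
        · exact Or.inr rfl
      · rintro (rfl | rfl)
        · exact ⟨Or.inr (Or.inr (Or.inl rfl)), hc⟩
        · exact ⟨Or.inr (Or.inr (Or.inr rfl)), hd⟩
    rcases hPQ with ⟨h1, h2⟩ | ⟨h1, h2⟩
    · rw [← h2, hQset]; exact Set.ncard_pair hcd
    · rw [← h1, hPset]; exact Set.ncard_pair hab
  · rw [← hSeq]
    exact hempty

lemma main_aux (R B : Finset ℂ) (hdisj : Disjoint R B)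
    (hgp : GenPos (↑R ∪ ↑B : Set ℂ)) :
    ∀ n : ℕ, ∀ P Q : Finset ℂ, ((P = R ∧ Q = B) ∨ (P = B ∧ Q = R)) →
    ∀ a b c d : ℂ, a ∈ P → b ∈ P → c ∈ Q → d ∈ Q →
    (segment ℝ a b ∩ segment ℝ c d).Nonempty →
    ((↑P ∪ ↑Q : Set ℂ) ∩ interior (convexHull ℝ ({a, b, c, d} : Set ℂ))).ncard ≤ n →
    ∃ p q s t : ℂ, IsBalancedConvex4Hole R B p q s t := by
  intro n
  induction n with
  | zero =>
    intro P Q hPQ a b c d ha hb hc hd hcross hcard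
    have hdisjPQ : Disjoint P Q := by
      rcases hPQ with ⟨h1, h2⟩ | ⟨h1, h2⟩ <;> subst h1 <;> subst h2
      · exact hdisj
      · exact hdisj.symm
    have hgp' : GenPos (↑P ∪ ↑Q : Set ℂ) := by
      rcases hPQ with ⟨h1, h2⟩ | ⟨h1, h2⟩ <;> subst h1 <;> subst h2
      · exact hgp
      · rwa [Set.union_comm]
    have hfin : ((↑P ∪ ↑Q : Set ℂ) ∩
        interior (convexHull ℝ ({a, b, c, d} : Set ℂ))).Finite :=
      ((P.finite_toSet.union Q.finite_toSet).inter_of_left _)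
    have hempty : (↑P ∪ ↑Q : Set ℂ) ∩
        interior (convexHull ℝ ({a, b, c, d} : Set ℂ)) = ∅ := by
      rw [← Set.ncard_eq_zero hfin]
      omega
    refine ⟨a, b, c, d, conclude hdisjPQ hgp' hPQ ha hb hc hd hcross ?_⟩
    intro x hx hxI
    exact Set.eq_empty_iff_forall_notMem.mp hempty x ⟨hx, hxI⟩
  | succ n ih =>
    intro P Q hPQ a b c d ha hb hc hd hcross hcard
    have hdisjPQ : Disjoint P Q := by
      rcases hPQ with ⟨h1, h2⟩ | ⟨h1, h2⟩ <;> subst h1 <;> subst h2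
      · exact hdisj
      · exact hdisj.symm
    have hgp' : GenPos (↑P ∪ ↑Q : Set ℂ) := by
      rcases hPQ with ⟨h1, h2⟩ | ⟨h1, h2⟩ <;> subst h1 <;> subst h2
      · exact hgp
      · rwa [Set.union_comm]
    have hfin : ((↑P ∪ ↑Q : Set ℂ) ∩
        interior (convexHull ℝ ({a, b, c, d} : Set ℂ))).Finite :=
      ((P.finite_toSet.union Q.finite_toSet).inter_of_left _)
    by_cases hempty : (↑P ∪ ↑Q : Set ℂ) ∩
        interior (convexHull ℝ ({a, b, c, d} : Set ℂ)) = ∅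
    · refine ⟨a, b, c, d, conclude hdisjPQ hgp' hPQ ha hb hc hd hcross ?_⟩
      intro x hx hxI
      exact Set.eq_empty_iff_forall_notMem.mp hempty x ⟨hx, hxI⟩
    · obtain ⟨x, hxS, hxI⟩ := Set.nonempty_iff_ne_empty.mpr hempty
      rcases hxS with hxP | hxQ
      · -- x has the same color as a, b
        obtain ⟨w, hwP, hcross2, hsub, hxnew⟩ :=
          descend hdisjPQ hgp' ha hb hc hd hcross hxP hxI
        apply ih P Q hPQ x w c d hxP hwP hc hd hcross2
        have hsub2 : (↑P ∪ ↑Q : Set ℂ) ∩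
            interior (convexHull ℝ ({x, w, c, d} : Set ℂ)) ⊆
            ((↑P ∪ ↑Q : Set ℂ) ∩
              interior (convexHull ℝ ({a, b, c, d} : Set ℂ))) \ {x} := by
          rintro z ⟨hz1, hz2⟩
          refine ⟨⟨hz1, interior_mono hsub hz2⟩, ?_⟩
          rw [mem_singleton_iff]
          rintro rfl
          exact hxnew hz2
        refine Nat.lt_succ_iff.mp ?_
        calc ((↑P ∪ ↑Q : Set ℂ) ∩
              interior (convexHull ℝ ({x, w, c, d} : Set ℂ))).ncard
            ≤ (((↑P ∪ ↑Q : Set ℂ) ∩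
              interior (convexHull ℝ ({a, b, c, d} : Set ℂ))) \ {x}).ncard :=
              Set.ncard_le_ncard hsub2 hfin.diff
          _ < ((↑P ∪ ↑Q : Set ℂ) ∩
              interior (convexHull ℝ ({a, b, c, d} : Set ℂ))).ncard :=
              Set.ncard_diff_singleton_lt_of_mem ⟨Or.inl hxP, hxI⟩ hfin
          _ ≤ n + 1 := hcard
          
      · -- x has the same color as c, d : swap the roles
        have hgp'' : GenPos (↑Q ∪ ↑P : Set ℂ) := by rwa [Set.union_comm]
        have hcross' : (segment ℝ c d ∩ segment ℝ a b).Nonempty := by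
          rwa [Set.inter_comm]
        have hsetswap : ({c, d, a, b} : Set ℂ) = ({a, b, c, d} : Set ℂ) := by
          ext z; simp only [mem_insert_iff, mem_singleton_iff]; tauto
        have hxI' : x ∈ interior (convexHull ℝ ({c, d, a, b} : Set ℂ)) := by
          rwa [hsetswap]
        obtain ⟨w, hwQ, hcross2, hsub, hxnew⟩ :=
          descend hdisjPQ.symm hgp'' hc hd ha hb hcross' hxQ hxI'
        apply ih Q P (by tauto) x w a b hxQ hwQ ha hb hcross2
        rw [hsetswap] at hsub
        have hsub2 : (↑Q ∪ ↑P : Set ℂ) ∩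
            interior (convexHull ℝ ({x, w, a, b} : Set ℂ)) ⊆
            ((↑P ∪ ↑Q : Set ℂ) ∩
              interior (convexHull ℝ ({a, b, c, d} : Set ℂ))) \ {x} := by
          rintro z ⟨hz1, hz2⟩
          refine ⟨⟨by rwa [Set.union_comm] at hz1, interior_mono hsub hz2⟩, ?_⟩
          rw [mem_singleton_iff]
          rintro rfl
          exact hxnew hz2
        refine Nat.lt_succ_iff.mp ?_
        calc ((↑Q ∪ ↑P : Set ℂ) ∩
              interior (convexHull ℝ ({x, w, a, b} : Set ℂ))).ncard
            ≤ (((↑P ∪ ↑Q : Set ℂ) ∩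
              interior (convexHull ℝ ({a, b, c, d} : Set ℂ))) \ {x}).ncard :=
              Set.ncard_le_ncard hsub2 hfin.diff
          _ < ((↑P ∪ ↑Q : Set ℂ) ∩
              interior (convexHull ℝ ({a, b, c, d} : Set ℂ))).ncard :=
              Set.ncard_diff_singleton_lt_of_mem ⟨Or.inr hxQ, hxI⟩ hfin
          _ ≤ n + 1 := hcard

end Stmt7Helpers

/-- If a segment joining two red points and a segment joining two
blue points intersect, then `S = R ∪ B` contains a balanced convex 4-hole. -/
theorem stmt7 (R B : Finset ℂ) (hdisj : Disjoint R B)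
    (hgp : GenPos (↑R ∪ ↑B : Set ℂ)) (a b c d : ℂ)
    (ha : a ∈ R) (hb : b ∈ R) (hc : c ∈ B) (hd : d ∈ B)
    (hcross : (segment ℝ a b ∩ segment ℝ c d).Nonempty) :
    ∃ p q s t : ℂ, IsBalancedConvex4Hole R B p q s t :=
  main_aux R B hdisj hgp
    ((↑R ∪ ↑B : Set ℂ) ∩ interior (convexHull ℝ ({a, b, c, d} : Set ℂ))).ncard
    R B (Or.inl ⟨rfl, rfl⟩) a b c d ha hb hc hd hcross le_rfl
end
end

section
/- Let S = R ∪ B be a finite bicolored point set in general position in the plane. If the boundary of the convex hull of R and the boundary of the convex hull of B intersect each other, then S contains a balanced convex 4-hole. -/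
noncomputable section

namespace S8

/-- Signed area cross product. -/
def cross (a b c : ℂ) : ℝ :=
  (b.re - a.re) * (c.im - a.im) - (b.im - a.im) * (c.re - a.re)

lemma cross_self_left (a b : ℂ) : cross a b a = 0 := by unfold cross; ring
lemma cross_self_right (a b : ℂ) : cross a b b = 0 := by unfold cross; ring

lemma cross_combo {a b u v : ℂ} {s t : ℝ} (hst : s + t = 1) :
    cross a b (s • u + t • v) = s * cross a b u + t * cross a b v := by
  have hs : s = 1 - t := by linarith
  subst hs
  simp [cross, Complex.add_re, Complex.add_im, Complex.smul_re, Complex.smul_im]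
  ring

lemma collinear_of_combo {p q r : ℂ} {s t : ℝ} (hst : s + t = 1)
    (h : r = s • p + t • q) : Collinear ℝ ({p, q, r} : Set ℂ) := by
  rw [collinear_iff_of_mem (Set.mem_insert p _)]
  refine ⟨q - p, ?_⟩
  rintro x (rfl | rfl | rfl)
  · exact ⟨0, by simp⟩
  · exact ⟨1, by simp⟩
  · refine ⟨t, ?_⟩
    have hs : s = 1 - t := by linarith
    subst hs
    rw [h]
    push_cast [Complex.real_smul, vadd_eq_add]
    ring

lemma collinear_of_cross_eq_zero {p q r : ℂ} (hpq : p ≠ q) (h : cross p q r = 0) :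
    Collinear ℝ ({p, q, r} : Set ℂ) := by
  have hw : ((r - p) / (q - p)).im = 0 := by
    rw [Complex.div_im, div_sub_div_same]
    have : (r - p).im * (q - p).re - (r - p).re * (q - p).im = cross p q r := by
      unfold cross; simp [Complex.sub_re, Complex.sub_im]; ring
    rw [this, h, zero_div]
  have hqp : q - p ≠ 0 := sub_ne_zero.2 (Ne.symm hpq)
  set w := (r - p) / (q - p) with hwdef
  have hr : r = (1 - w.re) • p + w.re • q := by
    have h1 : r - p = w * (q - p) := by
      rw [hwdef, div_mul_cancel₀ _ hqp]
    have h2 : (w : ℂ) = (w.re : ℂ) := by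
      rw [Complex.ext_iff]; simp [hw]
    rw [h2] at h1
    push_cast [Complex.real_smul]
    linear_combination h1
  exact collinear_of_combo (by ring) hr

/-- Key separation: if all of `P` is weakly on the other side of the line `a b`
from `v`, and `v` is in the hull of `P`, then `v` is on the line. -/
lemma cross_eq_zero_of_mem_hull {P : Set ℂ} {a b v : ℂ}
    (hP : ∀ p ∈ P, cross a b v * cross a b p ≤ 0)
    (hv : v ∈ convexHull ℝ P) : cross a b v = 0 := by
  have hconv : Convex ℝ {x : ℂ | cross a b v * cross a b x ≤ 0} := by
    intro x hx y hy s t hs ht hst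
    simp only [Set.mem_setOf_eq] at hx hy ⊢
    rw [cross_combo hst]
    nlinarith
  have h2 : cross a b v * cross a b v ≤ 0 := convexHull_min hP hconv hv
  exact mul_self_eq_zero.mp (le_antisymm h2 (mul_self_nonneg _))

lemma cross_translate (a b x w : ℂ) :
    cross a b (x + w) = cross a b x + ((b - a).re * w.im - (b - a).im * w.re) := by
  unfold cross; simp [Complex.add_re, Complex.add_im, Complex.sub_re, Complex.sub_im]; ring

/-- If a linear functional `cross a b ·` is maximized over `F` at `v`, then `v`
is not in the interior of the hull of `F`. -/
lemma not_mem_interior_of_max {F : Set ℂ} {a b v : ℂ} (hab : a ≠ b)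
    (hF : ∀ p ∈ F, cross a b p ≤ cross a b v) : v ∉ interior (convexHull ℝ F) := by
  intro hvint
  have hhull : convexHull ℝ F ⊆ {x : ℂ | cross a b x ≤ cross a b v} := by
    apply convexHull_min hF
    intro x hx y hy s t hs ht hst
    have hx' : cross a b x ≤ cross a b v := hx
    have hy' : cross a b y ≤ cross a b v := hy
    show cross a b (s • x + t • y) ≤ cross a b v
    rw [cross_combo hst]
    have hsum : s * cross a b v + t * cross a b v = cross a b v := by
      rw [← add_mul, hst, one_mul]
    nlinarith [mul_le_mul_of_nonneg_left hx' hs, mul_le_mul_of_nonneg_left hy' ht]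
  have hvint2 : v ∈ interior {x : ℂ | cross a b x ≤ cross a b v} :=
    interior_mono hhull hvint
  rw [mem_interior_iff_mem_nhds, Metric.mem_nhds_iff] at hvint2
  obtain ⟨ε, hε, hball⟩ := hvint2
  set u : ℂ := Complex.I * (b - a) with hu
  have hu0 : u ≠ 0 := by
    rw [hu]; exact mul_ne_zero Complex.I_ne_zero (sub_ne_zero.2 (Ne.symm hab))
  have hun : 0 < ‖u‖ := norm_pos_iff.2 hu0
  set δ : ℝ := ε / (2 * ‖u‖) with hδ
  have hδ0 : 0 < δ := by rw [hδ]; positivity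
  have hmem : v + δ • u ∈ Metric.ball v ε := by
    simp only [Metric.mem_ball, dist_eq_norm]
    rw [add_sub_cancel_left, norm_smul]
    simp only [Real.norm_eq_abs, abs_of_pos hδ0, hδ]
    rw [abs_of_pos (show (0:ℝ) < ε / (2 * ‖u‖) by positivity), div_mul_eq_mul_div, div_lt_iff₀ (by positivity)]
    nlinarith
  have := hball hmem
  simp only [Set.mem_setOf_eq] at this
  have hcalc : cross a b (v + δ • u) = cross a b v + δ * Complex.normSq (b - a) := by
    rw [cross_translate]
    congr 1
    have hre : (δ • u).re = -δ * (b - a).im := by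
      rw [hu]; simp [Complex.smul_re]; ring
    have him : (δ • u).im = δ * (b - a).re := by
      rw [hu]; simp [Complex.smul_im]
    rw [hre, him, Complex.normSq_apply]
    simp only [Complex.sub_re, Complex.sub_im]
    ring
  rw [hcalc] at this
  have hnsq : 0 < Complex.normSq (b - a) :=
    Complex.normSq_pos.2 (sub_ne_zero.2 (Ne.symm hab))
  nlinarith

lemma param_of_opp {X Y u : ℝ} (hXY : X * Y < 0) (h : (1 - u) * X + u * Y = 0) :
    0 < u ∧ u < 1 := by
  constructor
  · rcases lt_or_ge 0 u with h' | h'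
    · exact h'
    · exfalso
      have key : (1 - u) * (X * X) = -(u * (X * Y)) := by linear_combination X * h
      have h4 : 0 ≤ u * (X * Y) := mul_nonneg_of_nonpos_of_nonpos h' hXY.le
      have h6 : X * X = 0 := by nlinarith [mul_self_nonneg X]
      rw [mul_self_eq_zero.1 h6] at hXY
      simp at hXY
  · rcases lt_or_ge u 1 with h' | h'
    · exact h'
    · exfalso
      have key : u * (Y * Y) = (u - 1) * (X * Y) := by linear_combination Y * h
      have h4 : (u - 1) * (X * Y) ≤ 0 := mul_nonpos_of_nonneg_of_nonpos (by linarith) hXY.le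
      have h6 : Y * Y = 0 := by nlinarith [mul_self_nonneg Y]
      rw [mul_self_eq_zero.1 h6] at hXY
      simp at hXY

lemma opp_of_param {X Y u : ℝ} (hX : X ≠ 0) (hY : Y ≠ 0) (hu0 : 0 < u) (hu1 : u < 1)
    (h : (1 - u) * X + u * Y = 0) : X * Y < 0 := by
  rcases lt_trichotomy (X * Y) 0 with h' | h' | h'
  · exact h'
  · exfalso
    rcases mul_eq_zero.1 h' with h'' | h'' <;> [exact hX h''; exact hY h'']
  · exfalso
    have key : (1 - u) * (X * X) + u * (X * Y) = 0 := by linear_combination X * h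
    have hX2 : 0 < X * X := by
      rcases (mul_self_nonneg X).lt_or_eq with h'' | h''
      · exact h''
      · exact absurd (mul_self_eq_zero.1 h''.symm) hX
    nlinarith [mul_pos hu0 h', mul_pos (by linarith : (0:ℝ) < 1 - u) hX2]

lemma convex_combo3 {K : Set ℂ} (hK : Convex ℝ K) {a b c : ℂ}
    (ha : a ∈ K) (hb : b ∈ K) (hc : c ∈ K) {w1 w2 w3 : ℝ}
    (h1 : 0 ≤ w1) (h2 : 0 ≤ w2) (h3 : 0 ≤ w3) (hs : w1 + w2 + w3 = 1) :
    w1 • a + w2 • b + w3 • c ∈ K := by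
  rcases eq_or_lt_of_le (by linarith : (0:ℝ) ≤ w2 + w3) with h23 | h23
  · have hw2 : w2 = 0 := by linarith
    have hw3 : w3 = 0 := by linarith
    have hw1 : w1 = 1 := by linarith
    simpa [hw1, hw2, hw3] using ha
  · set m := (w2 / (w2 + w3)) • b + (w3 / (w2 + w3)) • c with hm
    have hmK : m ∈ K := hK hb hc (by positivity) (by positivity) (by field_simp)
    have : w1 • a + w2 • b + w3 • c = w1 • a + (w2 + w3) • m := by
      rw [hm, smul_add, smul_smul, smul_smul]
      rw [mul_div_cancel₀ _ (ne_of_gt h23), mul_div_cancel₀ _ (ne_of_gt h23)]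
      module
    rw [this]
    exact hK ha hmK h1 (le_of_lt h23) (by linarith)

lemma cross_bary_sum (a b c y : ℂ) :
    cross y b c + cross a y c + cross a b y = cross a b c := by
  unfold cross; ring

lemma cross_bary_combo (a b c y : ℂ) :
    cross y b c • a + cross a y c • b + cross a b y • c = cross a b c • y := by
  apply Complex.ext <;>
    simp only [Complex.add_re, Complex.add_im, Complex.smul_re, Complex.smul_im,
      smul_eq_mul] <;>
    (unfold cross; ring)

lemma cross_bary1 {a b c x : ℂ} {l1 l2 l3 : ℝ} (hs : l1 + l2 + l3 = 1)
    (hx : x = l1 • a + l2 • b + l3 • c) : cross x b c = l1 * cross a b c := by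
  have h3 : l3 = 1 - l1 - l2 := by linarith
  subst h3 hx
  unfold cross
  simp only [Complex.add_re, Complex.add_im, Complex.smul_re, Complex.smul_im, smul_eq_mul]
  ring

lemma cross_bary2 {a b c x : ℂ} {l1 l2 l3 : ℝ} (hs : l1 + l2 + l3 = 1)
    (hx : x = l1 • a + l2 • b + l3 • c) : cross a x c = l2 * cross a b c := by
  have h3 : l3 = 1 - l1 - l2 := by linarith
  subst h3 hx
  unfold cross
  simp only [Complex.add_re, Complex.add_im, Complex.smul_re, Complex.smul_im, smul_eq_mul]
  ring

lemma cross_bary3 {a b c x : ℂ} {l1 l2 l3 : ℝ} (hs : l1 + l2 + l3 = 1)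
    (hx : x = l1 • a + l2 • b + l3 • c) : cross a b x = l3 * cross a b c := by
  have h3 : l3 = 1 - l1 - l2 := by linarith
  subst h3 hx
  unfold cross
  simp only [Complex.add_re, Complex.add_im, Complex.smul_re, Complex.smul_im, smul_eq_mul]
  ring

lemma continuous_cross1 (b c : ℂ) : Continuous fun y : ℂ => cross y b c := by
  unfold cross; fun_prop

lemma continuous_cross2 (a c : ℂ) : Continuous fun y : ℂ => cross a y c := by
  unfold cross; fun_prop

lemma continuous_cross3 (a b : ℂ) : Continuous fun y : ℂ => cross a b y := by
  unfold cross; fun_prop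

lemma mem_interior_triangle {a b c x : ℂ} (hD : cross a b c ≠ 0) {l1 l2 l3 : ℝ}
    (h1 : 0 < l1) (h2 : 0 < l2) (h3 : 0 < l3) (hs : l1 + l2 + l3 = 1)
    (hx : x = l1 • a + l2 • b + l3 • c) :
    x ∈ interior (convexHull ℝ ({a, b, c} : Set ℂ)) := by
  set D := cross a b c with hDdef
  set O : Set ℂ := {y | 0 < cross y b c / D ∧ 0 < cross a y c / D ∧ 0 < cross a b y / D}
    with hO
  have hOopen : IsOpen O := by
    apply IsOpen.inter
    · exact isOpen_lt continuous_const ((continuous_cross1 b c).div_const D)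
    apply IsOpen.inter
    · exact isOpen_lt continuous_const ((continuous_cross2 a c).div_const D)
    · exact isOpen_lt continuous_const ((continuous_cross3 a b).div_const D)
  have hxO : x ∈ O := by
    refine ⟨?_, ?_, ?_⟩
    · rw [cross_bary1 hs hx, mul_div_assoc, div_self hD, mul_one]; exact h1
    · rw [cross_bary2 hs hx, mul_div_assoc, div_self hD, mul_one]; exact h2
    · rw [cross_bary3 hs hx, mul_div_assoc, div_self hD, mul_one]; exact h3
  have hsub : O ⊆ convexHull ℝ ({a, b, c} : Set ℂ) := by
    intro y hy
    obtain ⟨hy1, hy2, hy3⟩ := hy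
    have hcombo : (cross y b c / D) • a + (cross a y c / D) • b +
        (cross a b y / D) • c = y := by
      have h2 : cross y b c • a + cross a y c • b + cross a b y • c = D • y :=
        cross_bary_combo a b c y
      calc (cross y b c / D) • a + (cross a y c / D) • b + (cross a b y / D) • c
          = (D⁻¹ : ℝ) • (cross y b c • a + cross a y c • b + cross a b y • c) := by
            simp only [smul_add, smul_smul, div_eq_inv_mul]
        _ = (D⁻¹ : ℝ) • (D • y) := by rw [h2]
        _ = y := by rw [smul_smul, inv_mul_cancel₀ hD, one_smul]
    rw [← hcombo]
    exact convex_combo3 (convex_convexHull ℝ _)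
      (subset_convexHull ℝ _ (by simp)) (subset_convexHull ℝ _ (by simp))
      (subset_convexHull ℝ _ (by simp))
      (le_of_lt hy1) (le_of_lt hy2) (le_of_lt hy3)
      (by rw [← add_div, ← add_div, cross_bary_sum, div_self hD])
  exact interior_maximal hsub hOopen hxO

lemma param_of_cross_eq_zero {p q r : ℂ} (hpq : p ≠ q) (h : cross p q r = 0) :
    ∃ t : ℝ, r = (1 - t) • p + t • q := by
  have hw : ((r - p) / (q - p)).im = 0 := by
    rw [Complex.div_im, div_sub_div_same]
    have : (r - p).im * (q - p).re - (r - p).re * (q - p).im = cross p q r := by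
      unfold cross; simp [Complex.sub_re, Complex.sub_im]; ring
    rw [this, h, zero_div]
  have hqp : q - p ≠ 0 := sub_ne_zero.2 (Ne.symm hpq)
  set w := (r - p) / (q - p) with hwdef
  refine ⟨w.re, ?_⟩
  have h1 : r - p = w * (q - p) := by
    rw [hwdef, div_mul_cancel₀ _ hqp]
  have h2 : (w : ℂ) = (w.re : ℂ) := by
    rw [Complex.ext_iff]; simp [hw]
  rw [h2] at h1
  push_cast [Complex.real_smul]
  linear_combination h1

lemma ncross {S : Set ℂ} (hgp : GenPos S) {p q r : ℂ} (hp : p ∈ S) (hq : q ∈ S)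
    (hr : r ∈ S) (hpq : p ≠ q) (hpr : p ≠ r) (hqr : q ≠ r) : cross p q r ≠ 0 :=
  fun h0 => hgp p hp q hq r hr hpq hpr hqr (collinear_of_cross_eq_zero hpq h0)

lemma ne_of_cross_prod {a b x y : ℂ} (h : cross a b x * cross a b y < 0) : x ≠ y := by
  rintro rfl; nlinarith [mul_self_nonneg (cross a b x)]

lemma ne12_of_cross_prod {a b x y : ℂ} (h : cross a b x * cross a b y < 0) : a ≠ b := by
  rintro rfl
  rw [show cross a a x = 0 by unfold cross; ring] at h
  simp at h

lemma cross_swap (a b c : ℂ) : cross b a c = -cross a b c := by unfold cross; ring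

lemma seg_param {x a b : ℂ} (hx : x ∈ segment ℝ a b) :
    ∃ u : ℝ, 0 ≤ u ∧ u ≤ 1 ∧ x = (1 - u) • a + u • b := by
  obtain ⟨s, t, hs, ht, hst, hx⟩ := hx
  exact ⟨t, ht, by linarith, by rw [← hx]; congr 1; congr 1; linarith⟩

lemma mem_seg_of_param {a b : ℂ} {u : ℝ} (h0 : 0 ≤ u) (h1 : u ≤ 1) :
    (1 - u) • a + u • b ∈ segment ℝ a b :=
  ⟨1 - u, u, by linarith, h0, by ring, rfl⟩

lemma cross_combo4 {a b x1 x2 x3 x4 : ℂ} {w1 w2 w3 w4 : ℝ} (hs : w1 + w2 + w3 + w4 = 1) :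
    cross a b (w1 • x1 + w2 • x2 + w3 • x3 + w4 • x4) =
      w1 * cross a b x1 + w2 * cross a b x2 + w3 * cross a b x3 + w4 * cross a b x4 := by
  have h4 : w4 = 1 - w1 - w2 - w3 := by linarith
  subst h4
  unfold cross
  simp only [Complex.add_re, Complex.add_im, Complex.smul_re, Complex.smul_im, smul_eq_mul]
  ring

lemma hull4_rep {a b c d y : ℂ} (hy : y ∈ convexHull ℝ ({a, b, c, d} : Set ℂ)) :
    ∃ w1 w2 w3 w4 : ℝ, 0 ≤ w1 ∧ 0 ≤ w2 ∧ 0 ≤ w3 ∧ 0 ≤ w4 ∧ w1 + w2 + w3 + w4 = 1 ∧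
      y = w1 • a + w2 • b + w3 • c + w4 • d := by
  rw [convexHull_insert (by exact ⟨b, by simp⟩), mem_convexJoin] at hy
  obtain ⟨a', ha', z, hz, hyz⟩ := hy
  rw [Set.mem_singleton_iff] at ha'; subst ha'
  rw [convexHull_insert (by exact ⟨c, by simp⟩), mem_convexJoin] at hz
  obtain ⟨b', hb', z', hz', hzz'⟩ := hz
  rw [Set.mem_singleton_iff] at hb'; subst hb'
  rw [convexHull_pair] at hz'
  obtain ⟨u3, hu3, hu3', rfl⟩ := seg_param hz'
  obtain ⟨u2, hu2, hu2', rfl⟩ := seg_param hzz'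
  obtain ⟨u1, hu1, hu1', rfl⟩ := seg_param hyz
  refine ⟨1 - u1, u1 * (1 - u2), u1 * u2 * (1 - u3), u1 * u2 * u3, by linarith,
    mul_nonneg hu1 (by linarith),
    mul_nonneg (mul_nonneg hu1 hu2) (by linarith),
    mul_nonneg (mul_nonneg hu1 hu2) hu3, by ring, by module⟩

/-- If relative to the line `a b`, `v` is weakly on one side of all of `F`,
then `v` is not in the interior of the hull of `F`. -/
lemma not_mem_interior_of_side {F : Set ℂ} {a b v : ℂ} (hab : a ≠ b)
    (hv : cross a b v ≠ 0)
    (hF : ∀ p ∈ F, cross a b v * cross a b p ≤ cross a b v * cross a b v) :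
    v ∉ interior (convexHull ℝ F) := by
  rcases hv.lt_or_gt with hneg | hpos
  · apply not_mem_interior_of_max (Ne.symm hab)
    intro p hp
    have := hF p hp
    rw [cross_swap a b p, cross_swap a b v]
    nlinarith
  · apply not_mem_interior_of_max hab
    intro p hp
    have := hF p hp
    nlinarith

lemma transfer {r1 r2 b1 b2 p r : ℂ}
    (D1 : cross r1 r2 b1 * cross r1 r2 b2 < 0)
    (D2 : cross b1 b2 r1 * cross b1 b2 r2 < 0)
    (hphull : p ∈ convexHull ℝ ({r1, b1, r2, b2} : Set ℂ))
    (hrhull : r ∈ convexHull ℝ ({r1, b1, r2, b2} : Set ℂ))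
    (hD2' : cross b1 b2 p * cross b1 b2 r < 0)
    (hc1 : cross p r b1 ≠ 0) (hc2 : cross p r b2 ≠ 0) :
    cross p r b1 * cross p r b2 < 0 := by
  obtain ⟨hXr1, hXr2⟩ := mul_ne_zero_iff.1 (ne_of_lt D2)
  obtain ⟨hX, hY⟩ := mul_ne_zero_iff.1 (ne_of_lt hD2')
  set X := cross b1 b2 p with hXdef
  set Y := cross b1 b2 r with hYdef
  have hXYne : X - Y ≠ 0 := by
    intro h
    have : X = Y := by linarith
    rw [this] at hD2'
    nlinarith [mul_self_nonneg Y]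
  set t : ℝ := X / (X - Y) with htdef
  have heq : (1 - t) * X + t * Y = 0 := by
    rw [htdef]; field_simp; ring
  obtain ⟨ht0, ht1⟩ := param_of_opp hD2' heq
  set y : ℂ := (1 - t) • p + t • r with hydef
  have hy0 : cross b1 b2 y = 0 := by
    rw [hydef, cross_combo (by ring : (1 - t) + t = 1)]
    exact heq
  have hyhull : y ∈ convexHull ℝ ({r1, b1, r2, b2} : Set ℂ) :=
    (convex_convexHull ℝ _) hphull hrhull (by linarith) (le_of_lt ht0) (by ring)
  obtain ⟨w1, w2, w3, w4, hw1, hw2, hw3, hw4, hws, hyrep⟩ := hull4_rep hyhull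
  have hvals : w1 * cross b1 b2 r1 + w3 * cross b1 b2 r2 = 0 := by
    have := hy0
    rw [hyrep, cross_combo4 hws, cross_self_left, cross_self_right] at this
    linarith [this]
  have hyseg : y ∈ segment ℝ b1 b2 := by
    by_cases hw10 : w1 = 0
    · have hw30 : w3 = 0 := by
        rw [hw10, zero_mul, zero_add] at hvals
        exact (mul_eq_zero.1 hvals).resolve_right hXr2
      exact ⟨w2, w4, hw2, hw4, by linarith,
        by rw [hyrep, hw10, hw30]; module⟩
    · have hw1p : 0 < w1 := lt_of_le_of_ne hw1 (Ne.symm hw10)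
      have hw30 : w3 ≠ 0 := by
        intro h
        rw [h, zero_mul, add_zero] at hvals
        exact hXr1 ((mul_eq_zero.1 hvals).resolve_left hw10)
      have hw3p : 0 < w3 := lt_of_le_of_ne hw3 (Ne.symm hw30)
      set s : ℝ := w1 + w3 with hsdef
      have hsp : 0 < s := by positivity
      set m : ℂ := (w1 / s) • r1 + (w3 / s) • r2 with hmdef
      have hmsum : w1 / s + w3 / s = 1 := by field_simp; exact hsdef.symm
      have h1 : cross b1 b2 m = 0 := by
        rw [hmdef, cross_combo hmsum]
        field_simp
        linarith [hvals]
      have h2 : cross r1 r2 m = 0 := by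
        rw [hmdef, cross_combo hmsum, cross_self_left, cross_self_right]
        ring
      obtain ⟨u, hm⟩ := param_of_cross_eq_zero (ne12_of_cross_prod D2) h1
      have hgm : (1 - u) * cross r1 r2 b1 + u * cross r1 r2 b2 = 0 := by
        rw [← cross_combo (by ring : (1 - u) + u = 1), ← hm, h2]
      obtain ⟨hu0, hu1⟩ := param_of_opp D1 hgm
      have hmseg : m ∈ segment ℝ b1 b2 := by
        rw [hm]; exact mem_seg_of_param (le_of_lt hu0) (le_of_lt hu1)
      have hsm : s • m = w1 • r1 + w3 • r2 := by
        rw [hmdef, smul_add, smul_smul, smul_smul,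
          mul_div_cancel₀ _ (ne_of_gt hsp), mul_div_cancel₀ _ (ne_of_gt hsp)]
      have hyc : y = w2 • b1 + w4 • b2 + s • m := by
        rw [hsm, hyrep]; module
      rw [hyc]
      exact convex_combo3 (convex_segment b1 b2) (left_mem_segment ℝ b1 b2)
        (right_mem_segment ℝ b1 b2) hmseg hw2 hw4 (le_of_lt hsp) (by linarith)
  obtain ⟨u', hu'0, hu'1, hyrep2⟩ := seg_param hyseg
  have hcpry : cross p r y = 0 := by
    rw [hydef, cross_combo (by ring : (1 - t) + t = 1), cross_self_left,
      cross_self_right]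
    ring
  have hparam : (1 - u') * cross p r b1 + u' * cross p r b2 = 0 := by
    rw [← cross_combo (by ring : (1 - u') + u' = 1), ← hyrep2, hcpry]
  have hu'ne0 : u' ≠ 0 := by
    intro h
    rw [h] at hparam
    simp at hparam
    exact hc1 hparam
  have hu'ne1 : u' ≠ 1 := by
    intro h
    rw [h] at hparam
    simp at hparam
    exact hc2 hparam
  exact opp_of_param hc1 hc2 (lt_of_le_of_ne hu'0 (Ne.symm hu'ne0))
    (lt_of_le_of_ne hu'1 hu'ne1) hparam

lemma quad_vertex_not_interior {r1 r2 b1 b2 : ℂ}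
    (D1 : cross r1 r2 b1 * cross r1 r2 b2 < 0)
    (D2 : cross b1 b2 r1 * cross b1 b2 r2 < 0) :
    ∀ v ∈ ({r1, b1, r2, b2} : Set ℂ),
      v ∉ interior (convexHull ℝ ({r1, b1, r2, b2} : Set ℂ)) := by
  obtain ⟨hXr1, hXr2⟩ := mul_ne_zero_iff.1 (ne_of_lt D2)
  obtain ⟨hXb1, hXb2⟩ := mul_ne_zero_iff.1 (ne_of_lt D1)
  intro v hv
  rcases hv with rfl | rfl | rfl | rfl
  · apply not_mem_interior_of_side (ne12_of_cross_prod D2) hXr1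
    rintro q (rfl | rfl | rfl | rfl)
    · exact le_refl _
    · rw [cross_self_left, mul_zero]; exact mul_self_nonneg _
    · nlinarith [mul_self_nonneg (cross b1 b2 v)]
    · rw [cross_self_right, mul_zero]; exact mul_self_nonneg _
  · apply not_mem_interior_of_side (ne12_of_cross_prod D1) hXb1
    rintro q (rfl | rfl | rfl | rfl)
    · rw [cross_self_left, mul_zero]; exact mul_self_nonneg _
    · exact le_refl _
    · rw [cross_self_right, mul_zero]; exact mul_self_nonneg _
    · nlinarith [mul_self_nonneg (cross r1 r2 v)]
  · apply not_mem_interior_of_side (ne12_of_cross_prod D2) hXr2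
    rintro q (rfl | rfl | rfl | rfl)
    · nlinarith [mul_self_nonneg (cross b1 b2 v)]
    · rw [cross_self_left, mul_zero]; exact mul_self_nonneg _
    · exact le_refl _
    · rw [cross_self_right, mul_zero]; exact mul_self_nonneg _
  · apply not_mem_interior_of_side (ne12_of_cross_prod D1) hXb2
    rintro q (rfl | rfl | rfl | rfl)
    · rw [cross_self_left, mul_zero]; exact mul_self_nonneg _
    · nlinarith [mul_self_nonneg (cross r1 r2 v)]
    · rw [cross_self_right, mul_zero]; exact mul_self_nonneg _
    · exact le_refl _

lemma sign_pick {X A B' : ℝ} (hX : X ≠ 0) (hAB : A * B' < 0) :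
    X * A < 0 ∨ X * B' < 0 := by
  obtain ⟨hA, hB⟩ := mul_ne_zero_iff.1 (ne_of_lt hAB)
  rcases hX.lt_or_gt with h | h
  · rcases hA.lt_or_gt with h' | h'
    · right
      have hB' : 0 < B' := by nlinarith
      exact mul_neg_of_neg_of_pos h hB'
    · left; exact mul_neg_of_neg_of_pos h h'
  · rcases hA.lt_or_gt with h' | h'
    · left; exact mul_neg_of_pos_of_neg h h'
    · right
      have hB' : B' < 0 := by nlinarith
      exact mul_neg_of_pos_of_neg h hB'

lemma step_geo {a1 a2 c1 c2 p : ℂ}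
    (D1 : cross a1 a2 c1 * cross a1 a2 c2 < 0)
    (D2 : cross c1 c2 a1 * cross c1 c2 a2 < 0)
    (hphull : p ∈ convexHull ℝ ({a1, c1, a2, c2} : Set ℂ))
    (hX : cross c1 c2 p ≠ 0)
    (hnz : ∀ a ∈ ({a1, a2} : Set ℂ), cross p a c1 ≠ 0 ∧ cross p a c2 ≠ 0) :
    ∃ a ∈ ({a1, a2} : Set ℂ),
      cross p a c1 * cross p a c2 < 0 ∧ cross c1 c2 p * cross c1 c2 a < 0 := by
  rcases sign_pick hX D2 with h | h
  · exact ⟨a1, by simp, transfer D1 D2 hphull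
      (subset_convexHull ℝ _ (by simp)) h (hnz a1 (by simp)).1 (hnz a1 (by simp)).2, h⟩
  · exact ⟨a2, by simp, transfer D1 D2 hphull
      (subset_convexHull ℝ _ (by simp)) h (hnz a2 (by simp)).1 (hnz a2 (by simp)).2, h⟩

lemma build (R B : Finset ℂ) (hdisj : Disjoint R B) {r1 r2 b1 b2 : ℂ}
    (hr1 : r1 ∈ R) (hr2 : r2 ∈ R) (hb1 : b1 ∈ B) (hb2 : b2 ∈ B)
    (D1 : cross r1 r2 b1 * cross r1 r2 b2 < 0)
    (D2 : cross b1 b2 r1 * cross b1 b2 r2 < 0)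
    (hempty : ∀ x ∈ (↑R ∪ ↑B : Set ℂ),
      x ∉ interior (convexHull ℝ ({r1, b1, r2, b2} : Set ℂ))) :
    IsBalancedConvex4Hole R B r1 b1 r2 b2 := by
  obtain ⟨hXr1, hXr2⟩ := mul_ne_zero_iff.1 (ne_of_lt D2)
  obtain ⟨hXb1, hXb2⟩ := mul_ne_zero_iff.1 (ne_of_lt D1)
  have hr12 : r1 ≠ r2 := ne_of_cross_prod D2
  have hb12 : b1 ≠ b2 := ne_of_cross_prod D1
  have hRB : ∀ x ∈ R, ∀ y ∈ B, x ≠ y := by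
    intro x hx y hy hxy
    exact (Finset.disjoint_left.1 hdisj hx) (hxy ▸ hy)
  have H1 : r1 ∉ convexHull ℝ ({b1, r2, b2} : Set ℂ) := by
    intro hmem
    refine hXr1 (cross_eq_zero_of_mem_hull ?_ hmem)
    rintro q (rfl | rfl | rfl)
    · rw [cross_self_left, mul_zero]
    · exact le_of_lt D2
    · rw [cross_self_right, mul_zero]
  have H2 : b1 ∉ convexHull ℝ ({r1, r2, b2} : Set ℂ) := by
    intro hmem
    refine hXb1 (cross_eq_zero_of_mem_hull ?_ hmem)
    rintro q (rfl | rfl | rfl)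
    · rw [cross_self_left, mul_zero]
    · rw [cross_self_right, mul_zero]
    · exact le_of_lt D1
  have H3 : r2 ∉ convexHull ℝ ({b1, r1, b2} : Set ℂ) := by
    intro hmem
    refine hXr2 (cross_eq_zero_of_mem_hull ?_ hmem)
    rintro q (rfl | rfl | rfl)
    · rw [cross_self_left, mul_zero]
    · rw [mul_comm] at D2; exact le_of_lt D2
    · rw [cross_self_right, mul_zero]
  have H4 : b2 ∉ convexHull ℝ ({r1, r2, b1} : Set ℂ) := by
    intro hmem
    refine hXb2 (cross_eq_zero_of_mem_hull ?_ hmem)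
    rintro q (rfl | rfl | rfl)
    · rw [cross_self_left, mul_zero]
    · rw [cross_self_right, mul_zero]
    · rw [mul_comm] at D1; exact le_of_lt D1
  refine ⟨?_, ?_, ?_, ?_, ?_, hempty⟩
  · have n1 : r1 ≠ b1 := hRB _ hr1 _ hb1
    have n3 : r1 ≠ b2 := hRB _ hr1 _ hb2
    have n4 : b1 ≠ r2 := (hRB _ hr2 _ hb1).symm
    have n6 : r2 ≠ b2 := hRB _ hr2 _ hb2
    simp [List.pairwise_cons, n1, hr12, n3, n4, hb12, n6]
  · intro x hx hmem
    rcases hx with rfl | rfl | rfl | rfl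
    · exact H1 (convexHull_mono (by intro z hz; simp at hz ⊢; tauto) hmem)
    · exact H2 (convexHull_mono (by intro z hz; simp at hz ⊢; tauto) hmem)
    · exact H3 (convexHull_mono (by intro z hz; simp at hz ⊢; tauto) hmem)
    · exact H4 (convexHull_mono (by intro z hz; simp at hz ⊢; tauto) hmem)
  · rintro z (rfl | rfl | rfl | rfl)
    exacts [Or.inl (by exact_mod_cast hr1), Or.inr (by exact_mod_cast hb1),
      Or.inl (by exact_mod_cast hr2), Or.inr (by exact_mod_cast hb2)]
  · have e1 : ({r1, b1, r2, b2} : Set ℂ) ∩ ↑R = ({r1, r2} : Set ℂ) := by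
      ext z
      simp only [Set.mem_inter_iff, Set.mem_insert_iff, Set.mem_singleton_iff,
        Finset.coe_insert, Finset.mem_coe]
      constructor
      · rintro ⟨rfl | rfl | rfl | rfl, hzR⟩
        · exact Or.inl rfl
        · exact absurd rfl (hRB _ hzR _ hb1)
        · exact Or.inr rfl
        · exact absurd rfl (hRB _ hzR _ hb2)
      · rintro (rfl | rfl)
        exacts [⟨Or.inl rfl, hr1⟩, ⟨Or.inr (Or.inr (Or.inl rfl)), hr2⟩]
    rw [e1, Set.ncard_pair hr12]
  · have e2 : ({r1, b1, r2, b2} : Set ℂ) ∩ ↑B = ({b1, b2} : Set ℂ) := by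
      ext z
      simp only [Set.mem_inter_iff, Set.mem_insert_iff, Set.mem_singleton_iff,
        Finset.coe_insert, Finset.mem_coe]
      constructor
      · rintro ⟨rfl | rfl | rfl | rfl, hzB⟩
        · exact absurd rfl ((hRB _ hr1 _ hzB))
        · exact Or.inl rfl
        · exact absurd rfl ((hRB _ hr2 _ hzB))
        · exact Or.inr rfl
      · rintro (rfl | rfl)
        exacts [⟨Or.inr (Or.inl rfl), hb1⟩, ⟨Or.inr (Or.inr (Or.inr rfl)), hb2⟩]
    rw [e2, Set.ncard_pair hb12]

lemma key (R B : Finset ℂ) (hdisj : Disjoint R B) (hgp : GenPos (↑R ∪ ↑B : Set ℂ)) :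
    ∀ n : ℕ, ∀ r1 r2 b1 b2 : ℂ, r1 ∈ R → r2 ∈ R → b1 ∈ B → b2 ∈ B →
      cross r1 r2 b1 * cross r1 r2 b2 < 0 → cross b1 b2 r1 * cross b1 b2 r2 < 0 →
      ((↑R ∪ ↑B : Set ℂ) ∩
        interior (convexHull ℝ ({r1, b1, r2, b2} : Set ℂ))).ncard ≤ n →
      ∃ p q s t : ℂ, IsBalancedConvex4Hole R B p q s t := by
  have hSfin : ((↑R ∪ ↑B : Set ℂ)).Finite := (R.finite_toSet).union (B.finite_toSet)
  have hRB : ∀ x ∈ R, ∀ y ∈ B, x ≠ y := by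
    intro x hx y hy hxy
    exact (Finset.disjoint_left.1 hdisj hx) (hxy ▸ hy)
  intro n
  induction n with
  | zero =>
    intro r1 r2 b1 b2 hr1 hr2 hb1 hb2 D1 D2 hcount
    refine ⟨r1, b1, r2, b2, build R B hdisj hr1 hr2 hb1 hb2 D1 D2 ?_⟩
    intro x hx hxint
    have : x ∈ (↑R ∪ ↑B : Set ℂ) ∩
        interior (convexHull ℝ ({r1, b1, r2, b2} : Set ℂ)) := ⟨hx, hxint⟩
    have hne : ((↑R ∪ ↑B : Set ℂ) ∩
        interior (convexHull ℝ ({r1, b1, r2, b2} : Set ℂ))).Nonempty := ⟨x, this⟩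
    have := Set.ncard_pos (hSfin.inter_of_left _) |>.2 hne
    omega
  | succ n IH =>
    intro r1 r2 b1 b2 hr1 hr2 hb1 hb2 D1 D2 hcount
    set V : Set ℂ := {r1, b1, r2, b2} with hV
    by_cases hle : ((↑R ∪ ↑B : Set ℂ) ∩ interior (convexHull ℝ V)).ncard ≤ n
    · exact IH r1 r2 b1 b2 hr1 hr2 hb1 hb2 D1 D2 hle
    have hfinint : ((↑R ∪ ↑B : Set ℂ) ∩ interior (convexHull ℝ V)).Finite :=
      hSfin.inter_of_left _
    have hpos : 0 < ((↑R ∪ ↑B : Set ℂ) ∩ interior (convexHull ℝ V)).ncard := by omega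
    obtain ⟨p, hpS, hpint⟩ := (Set.ncard_pos hfinint).1 hpos
    have hphull : p ∈ convexHull ℝ V := interior_subset hpint
    have hpnv : p ∉ V := fun hmem => quad_vertex_not_interior D1 D2 p hmem hpint
    have hpr1 : p ≠ r1 := fun h => hpnv (by rw [h]; exact Or.inl rfl)
    have hpb1 : p ≠ b1 := fun h => hpnv (by rw [h]; exact Or.inr (Or.inl rfl))
    have hpr2 : p ≠ r2 := fun h => hpnv (by rw [h]; exact Or.inr (Or.inr (Or.inl rfl)))
    have hpb2 : p ≠ b2 := fun h => hpnv (by rw [h]; exact Or.inr (Or.inr (Or.inr rfl)))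
    have hSr1 : (r1 : ℂ) ∈ (↑R ∪ ↑B : Set ℂ) := Or.inl (by exact_mod_cast hr1)
    have hSr2 : (r2 : ℂ) ∈ (↑R ∪ ↑B : Set ℂ) := Or.inl (by exact_mod_cast hr2)
    have hSb1 : (b1 : ℂ) ∈ (↑R ∪ ↑B : Set ℂ) := Or.inr (by exact_mod_cast hb1)
    have hSb2 : (b2 : ℂ) ∈ (↑R ∪ ↑B : Set ℂ) := Or.inr (by exact_mod_cast hb2)
    have hb12 : b1 ≠ b2 := ne_of_cross_prod D1
    have hr12 : r1 ≠ r2 := ne_of_cross_prod D2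
    rcases hpS with hpR | hpB
    · -- p is red
      have hX : cross b1 b2 p ≠ 0 :=
        ncross hgp hSb1 hSb2 (Or.inl hpR) hb12 (Ne.symm hpb1) (Ne.symm hpb2)
      have hnz : ∀ a ∈ ({r1, r2} : Set ℂ), cross p a b1 ≠ 0 ∧ cross p a b2 ≠ 0 := by
        rintro a (rfl | rfl) <;> constructor
        · exact ncross hgp (Or.inl hpR) hSr1 hSb1 hpr1 hpb1 (hRB _ hr1 _ hb1)
        · exact ncross hgp (Or.inl hpR) hSr1 hSb2 hpr1 hpb2 (hRB _ hr1 _ hb2)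
        · exact ncross hgp (Or.inl hpR) hSr2 hSb1 hpr2 hpb1 (hRB _ hr2 _ hb1)
        · exact ncross hgp (Or.inl hpR) hSr2 hSb2 hpr2 hpb2 (hRB _ hr2 _ hb2)
      obtain ⟨r, hrmem, D1n, D2n⟩ := step_geo D1 D2 hphull hX hnz
      have hrR : r ∈ R := by rcases hrmem with rfl | rfl <;> assumption
      have hrhullmem : r ∈ V := by rcases hrmem with rfl | rfl <;> simp [hV]
      -- new quad {p, b1, r, b2}
      have hsub : convexHull ℝ ({p, b1, r, b2} : Set ℂ) ⊆ convexHull ℝ V := by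
        apply convexHull_min _ (convex_convexHull ℝ V)
        rintro z (rfl | rfl | rfl | rfl)
        · exact hphull
        · exact subset_convexHull ℝ V (Or.inr (Or.inl rfl))
        · exact subset_convexHull ℝ V hrhullmem
        · exact subset_convexHull ℝ V (Or.inr (Or.inr (Or.inr rfl)))
      have hpnotnew : p ∉ interior (convexHull ℝ ({p, b1, r, b2} : Set ℂ)) :=
        quad_vertex_not_interior D1n D2n p (Or.inl rfl)
      have hss : ((↑R ∪ ↑B : Set ℂ) ∩ interior (convexHull ℝ ({p, b1, r, b2} : Set ℂ)))
          ⊂ ((↑R ∪ ↑B : Set ℂ) ∩ interior (convexHull ℝ V)) := by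
        refine (Set.ssubset_iff_of_subset ?_).2 ⟨p, ⟨Or.inl hpR, hpint⟩, ?_⟩
        · exact Set.inter_subset_inter_right _ (interior_mono hsub)
        · rintro ⟨-, h⟩; exact hpnotnew h
      have hlt := Set.ncard_lt_ncard hss hfinint
      exact IH p r b1 b2 hpR hrR hb1 hb2 D1n D2n (by omega)
    · -- p is blue
      have hX : cross r1 r2 p ≠ 0 :=
        ncross hgp hSr1 hSr2 (Or.inr hpB) hr12 (Ne.symm hpr1) (Ne.symm hpr2)
      have hVswap : ({b1, r1, b2, r2} : Set ℂ) = V := by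
        rw [hV]; ext z; simp; tauto
      have hnz : ∀ a ∈ ({b1, b2} : Set ℂ), cross p a r1 ≠ 0 ∧ cross p a r2 ≠ 0 := by
        rintro a (rfl | rfl) <;> constructor
        · exact ncross hgp (Or.inr hpB) hSb1 hSr1 hpb1 hpr1 ((hRB _ hr1 _ hb1).symm)
        · exact ncross hgp (Or.inr hpB) hSb1 hSr2 hpb1 hpr2 ((hRB _ hr2 _ hb1).symm)
        · exact ncross hgp (Or.inr hpB) hSb2 hSr1 hpb2 hpr1 ((hRB _ hr1 _ hb2).symm)
        · exact ncross hgp (Or.inr hpB) hSb2 hSr2 hpb2 hpr2 ((hRB _ hr2 _ hb2).symm)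
      obtain ⟨b, hbmem, D2n, D1n⟩ := step_geo D2 D1 (by rw [hVswap]; exact hphull) hX hnz
      have hbB : b ∈ B := by rcases hbmem with rfl | rfl <;> assumption
      have hbhullmem : b ∈ V := by rcases hbmem with rfl | rfl <;> simp [hV]
      -- new quad: reds (r1, r2), blues (p, b); vertex set {r1, p, r2, b}
      have D1new : cross r1 r2 p * cross r1 r2 b < 0 := D1n
      have D2new : cross p b r1 * cross p b r2 < 0 := D2n
      have hsub : convexHull ℝ ({r1, p, r2, b} : Set ℂ) ⊆ convexHull ℝ V := by
        apply convexHull_min _ (convex_convexHull ℝ V)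
        rintro z (rfl | rfl | rfl | rfl)
        · exact subset_convexHull ℝ V (Or.inl rfl)
        · exact hphull
        · exact subset_convexHull ℝ V (Or.inr (Or.inr (Or.inl rfl)))
        · exact subset_convexHull ℝ V hbhullmem
      have hpnotnew : p ∉ interior (convexHull ℝ ({r1, p, r2, b} : Set ℂ)) :=
        quad_vertex_not_interior D1new D2new p (Or.inr (Or.inl rfl))
      have hss : ((↑R ∪ ↑B : Set ℂ) ∩ interior (convexHull ℝ ({r1, p, r2, b} : Set ℂ)))
          ⊂ ((↑R ∪ ↑B : Set ℂ) ∩ interior (convexHull ℝ V)) := by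
        refine (Set.ssubset_iff_of_subset ?_).2 ⟨p, ⟨Or.inr hpB, hpint⟩, ?_⟩
        · exact Set.inter_subset_inter_right _ (interior_mono hsub)
        · rintro ⟨-, h⟩; exact hpnotnew h
      have hlt := Set.ncard_lt_ncard hss hfinint
      exact IH r1 r2 p b hr1 hr2 hpB hbB D1new D2new (by omega)

lemma hull_frontier_struct (A : Finset ℂ)
    (hnc : ∀ a b c : ℂ, a ∈ A → b ∈ A → c ∈ A → a ≠ b → a ≠ c → b ≠ c →
      cross a b c ≠ 0) {x : ℂ}
    (hx : x ∈ frontier (convexHull ℝ (↑A : Set ℂ))) :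
    (x ∈ (↑A : Set ℂ)) ∨ ∃ a b : ℂ, a ∈ A ∧ b ∈ A ∧ a ≠ b ∧
      ∃ u : ℝ, 0 < u ∧ u < 1 ∧ x = (1 - u) • a + u • b := by
  have hclosed : IsClosed (convexHull ℝ (↑A : Set ℂ)) :=
    (A.finite_toSet.isCompact_convexHull (𝕜 := ℝ)).isClosed
  have hxhull : x ∈ convexHull ℝ (↑A : Set ℂ) := by
    have := frontier_subset_closure hx
    rwa [hclosed.closure_eq] at this
  have hnotint : x ∉ interior (convexHull ℝ (↑A : Set ℂ)) := hx.2
  rw [convexHull_eq_union] at hxhull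
  simp only [Set.mem_iUnion, exists_prop] at hxhull
  obtain ⟨t, htA, htind, hxt⟩ := hxhull
  have hcard : t.card ≤ 3 := by
    have h1 := htind.card_le_finrank_succ
    rw [Fintype.card_coe] at h1
    have h2 : Module.finrank ℝ (vectorSpan ℝ (Set.range ((↑) : ↥t → ℂ))) ≤
        Module.finrank ℝ ℂ := Submodule.finrank_le _
    rw [Complex.finrank_real_complex] at h2
    omega
  have hseg : ∀ a b : ℂ, a ∈ A → b ∈ A → x ∈ segment ℝ a b →
      (x ∈ (↑A : Set ℂ)) ∨ ∃ a' b' : ℂ, a' ∈ A ∧ b' ∈ A ∧ a' ≠ b' ∧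
        ∃ u : ℝ, 0 < u ∧ u < 1 ∧ x = (1 - u) • a' + u • b' := by
    intro a b haA hbA hxab
    obtain ⟨u, hu0, hu1, hxu⟩ := seg_param hxab
    rcases eq_or_lt_of_le hu0 with h0 | h0
    · left; rw [hxu, ← h0]; simpa using haA
    rcases eq_or_lt_of_le hu1 with h1 | h1
    · left; rw [hxu, h1]; simpa using hbA
    by_cases hab : a = b
    · left
      rw [hxu, hab]
      have heq : (1 - u) • b + u • b = b := by module
      rw [heq]; simpa using hbA
    · exact Or.inr ⟨a, b, haA, hbA, hab, u, h0, h1, hxu⟩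
  interval_cases hc : t.card
  · rw [Finset.card_eq_zero] at hc
    subst hc
    simp at hxt
  · rw [Finset.card_eq_one] at hc
    obtain ⟨a, rfl⟩ := hc
    simp only [Finset.coe_singleton, convexHull_singleton, Set.mem_singleton_iff] at hxt
    subst hxt
    exact Or.inl (htA (by simp))
  · rw [Finset.card_eq_two] at hc
    obtain ⟨a, b, hab, rfl⟩ := hc
    have hco : (↑({a, b} : Finset ℂ) : Set ℂ) = {a, b} := by simp
    rw [hco, convexHull_pair] at hxt
    exact hseg a b (htA (by simp)) (htA (by simp)) hxt
  · rw [Finset.card_eq_three] at hc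
    obtain ⟨a, b, c, hab, hac, hbc, rfl⟩ := hc
    have haA : a ∈ A := htA (by simp)
    have hbA : b ∈ A := htA (by simp)
    have hcA : c ∈ A := htA (by simp)
    have hcoe : (↑({a, b, c} : Finset ℂ) : Set ℂ) = {a, b, c} := by simp
    rw [hcoe] at hxt
    rw [convexHull_insert (by exact ⟨b, by simp⟩), mem_convexJoin] at hxt
    obtain ⟨a', ha', z, hz, hxz⟩ := hxt
    rw [Set.mem_singleton_iff] at ha'
    rw [ha'] at hxz
    rw [convexHull_pair] at hz
    obtain ⟨t1, ht10, ht11, hxrep⟩ := seg_param hxz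
    obtain ⟨u1, hu10, hu11, hzrep⟩ := seg_param hz
    rcases eq_or_lt_of_le ht10 with h0 | h0
    · left; rw [hxrep, ← h0]; simpa using haA
    rcases eq_or_lt_of_le ht11 with h1 | h1
    · apply hseg b c hbA hcA
      rw [hxrep, h1]
      simpa using hz
    rcases eq_or_lt_of_le hu10 with g0 | g0
    · apply hseg a b haA hbA
      rw [hxrep, hzrep, ← g0]
      simpa using mem_seg_of_param ht10 ht11
    rcases eq_or_lt_of_le hu11 with g1 | g1
    · apply hseg a c haA hcA
      rw [hxrep, hzrep, g1]
      simpa using mem_seg_of_param ht10 ht11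
    · exfalso
      have hD := hnc a b c haA hbA hcA hab hac hbc
      have hint : x ∈ interior (convexHull ℝ ({a, b, c} : Set ℂ)) := by
        refine mem_interior_triangle hD (l1 := 1 - t1) (l2 := t1 * (1 - u1))
          (l3 := t1 * u1) (by linarith) (by nlinarith) (by nlinarith) (by ring) ?_
        rw [hxrep, hzrep]; module
      have hsubA : ({a, b, c} : Set ℂ) ⊆ (↑A : Set ℂ) := by
        rintro z (rfl | rfl | rfl) <;> simpa
      exact hnotint (interior_mono (convexHull_mono hsubA) hint)

end S8

/-- If the boundaries of `CH(R)` and `CH(B)` intersect, then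
`S = R ∪ B` contains a balanced convex 4-hole. -/
theorem stmt8 (R B : Finset ℂ) (hdisj : Disjoint R B)
    (hgp : GenPos (↑R ∪ ↑B : Set ℂ))
    (hcross : (frontier (convexHull ℝ (↑R : Set ℂ)) ∩
      frontier (convexHull ℝ (↑B : Set ℂ))).Nonempty) :
    ∃ p q s t : ℂ, IsBalancedConvex4Hole R B p q s t := by
  classical
  obtain ⟨x, hxR, hxB⟩ := hcross
  have hRB : ∀ a ∈ R, ∀ b ∈ B, a ≠ b := fun a ha b hb hab =>
    (Finset.disjoint_left.1 hdisj ha) (hab ▸ hb)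
  have hmR : ∀ {a : ℂ}, a ∈ R → a ∈ (↑R ∪ ↑B : Set ℂ) := fun ha => Or.inl ha
  have hmB : ∀ {a : ℂ}, a ∈ B → a ∈ (↑R ∪ ↑B : Set ℂ) := fun ha => Or.inr ha
  have hncR : ∀ a b c : ℂ, a ∈ R → b ∈ R → c ∈ R → a ≠ b → a ≠ c → b ≠ c →
      S8.cross a b c ≠ 0 := fun a b c ha hb hc h1 h2 h3 =>
    S8.ncross hgp (hmR ha) (hmR hb) (hmR hc) h1 h2 h3
  have hncB : ∀ a b c : ℂ, a ∈ B → b ∈ B → c ∈ B → a ≠ b → a ≠ c → b ≠ c →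
      S8.cross a b c ≠ 0 := fun a b c ha hb hc h1 h2 h3 =>
    S8.ncross hgp (hmB ha) (hmB hb) (hmB hc) h1 h2 h3
  rcases S8.hull_frontier_struct R hncR hxR with hA |
      ⟨r1, r2, hr1, hr2, hr12, u, hu0, hu1, hxu⟩ <;>
    rcases S8.hull_frontier_struct B hncB hxB with hB |
      ⟨b1, b2, hb1, hb2, hb12, v, hv0, hv1, hxv⟩
  · exact absurd hB (Finset.disjoint_left.1 hdisj hA)
  · -- x red vertex on open blue segment: collinear contradiction
    exfalso
    have hcol : Collinear ℝ ({b1, b2, x} : Set ℂ) := S8.collinear_of_combo (by ring) hxv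
    have hxA : x ∈ R := hA
    exact hgp b1 (hmB hb1) b2 (hmB hb2) x (hmR hxA) hb12
      ((hRB _ hxA _ hb1).symm) ((hRB _ hxA _ hb2).symm) hcol
  · exfalso
    have hcol : Collinear ℝ ({r1, r2, x} : Set ℂ) := S8.collinear_of_combo (by ring) hxu
    have hxB' : x ∈ B := hB
    exact hgp r1 (hmR hr1) r2 (hmR hr2) x (hmB hxB') hr12
      (hRB _ hr1 _ hxB') (hRB _ hr2 _ hxB') hcol
  · -- proper crossing
    have hcr : S8.cross r1 r2 x = 0 := by
      rw [hxu, S8.cross_combo (by ring : (1 - u) + u = 1), S8.cross_self_left,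
        S8.cross_self_right]
      ring
    have hcb : S8.cross b1 b2 x = 0 := by
      rw [hxv, S8.cross_combo (by ring : (1 - v) + v = 1), S8.cross_self_left,
        S8.cross_self_right]
      ring
    have hp1 : (1 - v) * S8.cross r1 r2 b1 + v * S8.cross r1 r2 b2 = 0 := by
      rw [← S8.cross_combo (by ring : (1 - v) + v = 1), ← hxv, hcr]
    have hp2 : (1 - u) * S8.cross b1 b2 r1 + u * S8.cross b1 b2 r2 = 0 := by
      rw [← S8.cross_combo (by ring : (1 - u) + u = 1), ← hxu, hcb]
    have hz1 : S8.cross r1 r2 b1 ≠ 0 :=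
      S8.ncross hgp (hmR hr1) (hmR hr2) (hmB hb1) hr12 (hRB _ hr1 _ hb1) (hRB _ hr2 _ hb1)
    have hz2 : S8.cross r1 r2 b2 ≠ 0 :=
      S8.ncross hgp (hmR hr1) (hmR hr2) (hmB hb2) hr12 (hRB _ hr1 _ hb2) (hRB _ hr2 _ hb2)
    have hz3 : S8.cross b1 b2 r1 ≠ 0 :=
      S8.ncross hgp (hmB hb1) (hmB hb2) (hmR hr1) hb12 ((hRB _ hr1 _ hb1).symm)
        ((hRB _ hr1 _ hb2).symm)
    have hz4 : S8.cross b1 b2 r2 ≠ 0 :=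
      S8.ncross hgp (hmB hb1) (hmB hb2) (hmR hr2) hb12 ((hRB _ hr2 _ hb1).symm)
        ((hRB _ hr2 _ hb2).symm)
    have D1 := S8.opp_of_param hz1 hz2 hv0 hv1 hp1
    have D2 := S8.opp_of_param hz3 hz4 hu0 hu1 hp2
    exact S8.key R B hdisj hgp _ r1 r2 b1 b2 hr1 hr2 hb1 hb2 D1 D2 le_rfl
end
end
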